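/- arXiv:2412.03245 — 2 statements merged into one kernel-verified Lean document; each statement's English description precedes it below -/
import Mathlib

section
/- Let ψ ∈ H^∞ be not identically zero, and suppose there exist zeros a, b of ψ in 𝔻 with mult_ψ(a) = m₁ ≠ m₂ = mult_ψ(b) such that no other zero of ψ in 𝔻 has multiplicity equal to m₁ or m₂. Then the only algebra automorphism (bijective, ℂ-linear, multiplicative self-map) of ψH^∞ is the identity map. -/
open Complex Metric Set

local notation "𝔻" => Complex.UnitDisc

/-- The closed unit disc, as a subset of `ℂ`. -/
def cD : Set ℂ := Metric.closedBall 0 1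

/-- A function on the open unit disc is analytic (holomorphic):
it is the restriction of a function differentiable on the open unit ball. -/
def HolOn (f : 𝔻 → ℂ) : Prop :=
  ∃ F : ℂ → ℂ, DifferentiableOn ℂ F (Metric.ball 0 1) ∧ ∀ z : 𝔻, F ↑z = f z

/-- Membership in `H^∞`, the algebra of bounded analytic functions on the unit disc. -/
def MemHinf (f : 𝔻 → ℂ) : Prop :=
  HolOn f ∧ ∃ M : ℝ, ∀ z : 𝔻, ‖f z‖ ≤ M

/-- Membership in the disc algebra `A(𝔻)`: continuous on the closed unit disc,
analytic in its interior. -/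
def MemDiscAlg (f : ↥cD → ℂ) : Prop :=
  ∃ F : ℂ → ℂ, ContinuousOn F cD ∧ DifferentiableOn ℂ F (Metric.ball 0 1) ∧
    ∀ z : ↥cD, F ↑z = f z

/-- `φ ∈ Aut(𝔻)`: a bijective analytic self-map of the unit disc. -/
def IsDiscAut (φ : 𝔻 → 𝔻) : Prop :=
  (∃ F : ℂ → ℂ, DifferentiableOn ℂ F (Metric.ball 0 1) ∧ ∀ z : 𝔻, F ↑z = ↑(φ z)) ∧
  Function.Bijective φ

/-- A Möbius automorphism of the unit disc, given by its global formula
`Φ z = η (a - z) / (1 - conj a * z)` with `|a| < 1`, `|η| = 1`; this is the analytic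
extension to (a neighbourhood of) the closed unit disc of a disc automorphism. -/
def IsMobius (Φ : ℂ → ℂ) : Prop :=
  ∃ a η : ℂ, ‖a‖ < 1 ∧ ‖η‖ = 1 ∧
    ∀ z : ℂ, Φ z = η * (a - z) / (1 - (starRingEnd ℂ) a * z)

/-- `T` is an algebra automorphism of the set `A` of complex-valued functions:
a bijective, `ℂ`-linear and multiplicative self-map of `A`. -/
def IsAlgAutOn {ι : Type} (A : Set (ι → ℂ)) (T : (ι → ℂ) → (ι → ℂ)) : Prop :=
  (∀ f ∈ A, T f ∈ A) ∧
  (∀ f ∈ A, ∀ g ∈ A, T (f + g) = T f + T g) ∧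
  (∀ (c : ℂ), ∀ f ∈ A, T (c • f) = c • T f) ∧
  (∀ f ∈ A, ∀ g ∈ A, T (f * g) = T f * T g) ∧
  Set.InjOn T A ∧ Set.SurjOn T A A

/-- The subalgebra `ψ H^∞ = {ψ · g : g ∈ H^∞}`. -/
def psiH (ψ : 𝔻 → ℂ) : Set (𝔻 → ℂ) :=
  {f | ∃ g, MemHinf g ∧ f = fun z => ψ z * g z}

/-- The subalgebra `ψ A(𝔻) = {ψ · g : g ∈ A(𝔻)}`. -/
def psiA (ψ : ↥cD → ℂ) : Set (↥cD → ℂ) :=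
  {f | ∃ g, MemDiscAlg g ∧ f = fun z => ψ z * g z}

/-- The composition operator `C_φ : f ↦ f ∘ φ` is a well-defined algebra automorphism
of the set `A` (it is automatically linear and multiplicative). -/
def CompAutOn (A : Set (𝔻 → ℂ)) (φ : 𝔻 → 𝔻) : Prop :=
  (∀ f ∈ A, f ∘ φ ∈ A) ∧ Set.InjOn (fun f => f ∘ φ) A ∧ Set.SurjOn (fun f => f ∘ φ) A A

/-- The Möbius factor `τ_a(z) = (a - z)/(1 - conj a · z)`. -/
noncomputable def mobius (a z : ℂ) : ℂ := (a - z) / (1 - (starRingEnd ℂ) a * z)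

/-- `f` has a zero of order (multiplicity) `k` at `w`:
`f z = (z - w)^k g z` with `g` analytic and `g w ≠ 0`. -/
def ZeroOrderAt (f : 𝔻 → ℂ) (w : 𝔻) (k : ℕ) : Prop :=
  ∃ g : 𝔻 → ℂ, HolOn g ∧ g w ≠ 0 ∧ ∀ z : 𝔻, f z = ((z : ℂ) - (w : ℂ)) ^ k * g z

/-- `g` is an invertible element of `H^∞`. -/
def InvHinf (g : 𝔻 → ℂ) : Prop :=
  MemHinf g ∧ ∃ h : 𝔻 → ℂ, MemHinf h ∧ ∀ z, g z * h z = 1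

/-- `g` is an invertible element of the disc algebra `A(𝔻)`. -/
def InvDiscAlg (g : ↥cD → ℂ) : Prop :=
  MemDiscAlg g ∧ ∃ h : ↥cD → ℂ, MemDiscAlg h ∧ ∀ z, g z * h z = 1

set_option maxHeartbeats 1000000

local notation "𝔹" => Metric.ball (0:ℂ) 1
set_option linter.dupNamespace false
set_option maxHeartbeats 1000000

noncomputable def Complex.abs : AbsoluteValue ℂ ℝ := IsAbsoluteValue.toAbsoluteValue (norm : ℂ → ℝ)

theorem Complex.norm_eq_abs (z : ℂ) : ‖z‖ = Complex.abs z := rfl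

theorem Complex.abs_conj (z : ℂ) : Complex.abs ((starRingEnd ℂ) z) = Complex.abs z :=
  Complex.norm_conj z

theorem Complex.sq_abs (z : ℂ) : Complex.abs z ^ 2 = Complex.normSq z := Complex.sq_norm z

namespace Aux

lemma mem_B_iff {z : ℂ} : z ∈ 𝔹 ↔ Complex.abs z < 1 := mem_ball_zero_iff

lemma coe_mem_B (z : 𝔻) : (z : ℂ) ∈ 𝔹 := mem_ball_zero_iff.2 (UnitDisc.norm_lt_one z)

/-- canonical extension of a disc function to ℂ -/
noncomputable def E (f : 𝔻 → ℂ) : ℂ → ℂ :=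
  fun z => if h : Complex.abs z < 1 then f (UnitDisc.mk z h) else 0

lemma E_apply (f : 𝔻 → ℂ) {z : ℂ} (h : Complex.abs z < 1) :
    E f z = f (UnitDisc.mk z h) := dif_pos h

lemma E_coe (f : 𝔻 → ℂ) (z : 𝔻) : E f ↑z = f z := by
  rw [E_apply f (UnitDisc.norm_lt_one z)]; simp

lemma E_apply_mem (f : 𝔻 → ℂ) {z : ℂ} (h : z ∈ 𝔹) :
    E f z = f (UnitDisc.mk z (mem_B_iff.1 h)) := dif_pos _

lemma holOn_iff {f : 𝔻 → ℂ} : HolOn f ↔ DifferentiableOn ℂ (E f) 𝔹 := by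
  constructor
  · rintro ⟨F, hF, hFf⟩
    refine hF.congr fun z hz => ?_
    rw [E_apply_mem f hz, ← hFf]; rfl
  · intro h; exact ⟨E f, h, fun z => E_coe f z⟩

lemma HolOn.diffE {f : 𝔻 → ℂ} (h : HolOn f) : DifferentiableOn ℂ (E f) 𝔹 :=
  holOn_iff.1 h

lemma funeq_of_E_eqOn {f g : 𝔻 → ℂ} (h : ∀ z ∈ 𝔹, E f z = E g z) : f = g := by
  funext ζ
  have := h ↑ζ (coe_mem_B ζ)
  rwa [E_coe, E_coe] at this

lemma memHinf_const (c : ℂ) : MemHinf (fun _ => c) :=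
  ⟨⟨fun _ => c, differentiableOn_const c, fun _ => rfl⟩, ‖c‖, fun _ => le_rfl⟩

lemma memHinf_one : MemHinf (fun _ => (1:ℂ)) := memHinf_const 1

lemma memHinf_id : MemHinf (fun z : 𝔻 => (z : ℂ)) :=
  ⟨⟨id, differentiableOn_id, fun _ => rfl⟩, 1, fun z => (UnitDisc.norm_lt_one z).le⟩

lemma memHinf_add {f g : 𝔻 → ℂ} (hf : MemHinf f) (hg : MemHinf g) :
    MemHinf (fun z => f z + g z) := by
  obtain ⟨⟨F, hF, hFf⟩, M, hM⟩ := hf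
  obtain ⟨⟨G, hG, hGg⟩, N, hN⟩ := hg
  exact ⟨⟨F + G, hF.add hG, fun z => by simp [hFf, hGg]⟩, M + N,
    fun z => (norm_add_le _ _).trans (add_le_add (hM z) (hN z))⟩

lemma memHinf_mul {f g : 𝔻 → ℂ} (hf : MemHinf f) (hg : MemHinf g) :
    MemHinf (fun z => f z * g z) := by
  obtain ⟨⟨F, hF, hFf⟩, M, hM⟩ := hf
  obtain ⟨⟨G, hG, hGg⟩, N, hN⟩ := hg
  have hM0 : 0 ≤ M := le_trans (norm_nonneg _) (hM 0)
  exact ⟨⟨F * G, hF.mul hG, fun z => by simp [hFf, hGg]⟩, M * N, fun z => by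
    rw [norm_mul]; exact mul_le_mul (hM z) (hN z) (norm_nonneg _) hM0⟩

lemma memHinf_const_mul {f : 𝔻 → ℂ} (hf : MemHinf f) (c : ℂ) :
    MemHinf (fun z => c * f z) := memHinf_mul (memHinf_const c) hf

lemma memHinf_sub_const {f : 𝔻 → ℂ} (hf : MemHinf f) (c : ℂ) :
    MemHinf (fun z => f z - c) := by
  have := memHinf_add hf (memHinf_const (-c)); simpa [sub_eq_add_neg] using this

/-- zero-divisor property for analytic functions on the ball -/
lemma zero_div {F G : ℂ → ℂ} (hF : DifferentiableOn ℂ F 𝔹) (hG : DifferentiableOn ℂ G 𝔹)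
    (h : ∀ z ∈ 𝔹, F z * G z = 0) (hFne : ∃ z ∈ 𝔹, F z ≠ 0) : ∀ z ∈ 𝔹, G z = 0 := by
  obtain ⟨z₀, hz₀B, hz₀⟩ := hFne
  have hFc : ContinuousAt F z₀ :=
    (hF.differentiableAt (isOpen_ball.mem_nhds hz₀B)).continuousAt
  have hev : ∀ᶠ z in nhds z₀, G z = 0 := by
    have h1 : ∀ᶠ z in nhds z₀, F z ≠ 0 := hFc.eventually_ne hz₀
    have h2 : ∀ᶠ z in nhds z₀, z ∈ 𝔹 := isOpen_ball.mem_nhds hz₀B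
    filter_upwards [h1, h2] with z hz1 hz2
    rcases mul_eq_zero.1 (h z hz2) with h' | h'
    · exact absurd h' hz1
    · exact h'
  exact (hG.analyticOnNhd isOpen_ball).eqOn_zero_of_preconnected_of_eventuallyEq_zero
    (convex_ball (0:ℂ) 1).isPreconnected hz₀B hev

/-- equality on ball from equality off the zero set of a nontrivial analytic D -/
lemma eq_off_zeros {F G D : ℂ → ℂ} (hF : DifferentiableOn ℂ F 𝔹) (hG : DifferentiableOn ℂ G 𝔹)
    (hD : DifferentiableOn ℂ D 𝔹) (hDne : ∃ z ∈ 𝔹, D z ≠ 0)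
    (h : ∀ z ∈ 𝔹, D z ≠ 0 → F z = G z) : ∀ z ∈ 𝔹, F z = G z := by
  have h0 : ∀ z ∈ 𝔹, D z * (F z - G z) = 0 := by
    intro z hz
    by_cases hDz : D z = 0
    · simp [hDz]
    · rw [h z hz hDz]; ring
  intro z hz
  have := zero_div hD (hF.sub hG) h0 hDne z hz
  exact sub_eq_zero.1 this

lemma char_norm_le (χ : (𝔻 → ℂ) → ℂ)
    (hadd : ∀ g h : 𝔻 → ℂ, MemHinf g → MemHinf h → χ (fun z => g z + h z) = χ g + χ h)
    (hmul : ∀ g h : 𝔻 → ℂ, MemHinf g → MemHinf h → χ (fun z => g z * h z) = χ g * χ h)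
    (hconst : ∀ c : ℂ, χ (fun _ => c) = c)
    {g : 𝔻 → ℂ} {M : ℝ} (hg : MemHinf g) (hM : ∀ z, ‖g z‖ ≤ M) : ‖χ g‖ ≤ M := by
  by_contra hlt
  push_neg at hlt
  set l := χ g with hl
  have hpos : 0 < ‖l‖ - M := by linarith
  have key : ∀ z : 𝔻, ‖l‖ - M ≤ ‖g z - l‖ := by
    intro z
    calc ‖l‖ - M ≤ ‖l‖ - ‖g z‖ := by linarith [hM z]
    _ ≤ ‖l - g z‖ := norm_sub_norm_le _ _
    _ = ‖g z - l‖ := norm_sub_rev _ _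
  have hne : ∀ z : 𝔻, g z - l ≠ 0 := fun z => by
    intro h0
    have hk := key z
    rw [h0, norm_zero] at hk; linarith
  have hEne : ∀ w ∈ 𝔹, E g w - l ≠ 0 := by
    intro w hw; rw [E_apply_mem g hw]; exact hne _
  have hinv : MemHinf (fun z : 𝔻 => (g z - l)⁻¹) := by
    constructor
    · exact ⟨fun w => (E g w - l)⁻¹,
        (((holOn_iff.1 hg.1).sub_const l).inv hEne), fun z => by
          show (E g ↑z - l)⁻¹ = _
          rw [E_coe]⟩
    · refine ⟨(‖l‖ - M)⁻¹, fun z => ?_⟩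
      rw [norm_inv]
      exact inv_anti₀ hpos (key z)
  have c2 : (fun z : 𝔻 => (g z - l) * (g z - l)⁻¹) = (fun _ : 𝔻 => (1:ℂ)) := by
    funext z; exact mul_inv_cancel₀ (hne z)
  have hgl : MemHinf (fun z : 𝔻 => g z - l) := memHinf_sub_const hg l
  have c1 : χ (fun z : 𝔻 => g z - l) = 0 := by
    have h' := hadd g (fun _ => -l) hg (memHinf_const (-l))
    have : (fun z : 𝔻 => g z - l) = (fun z => g z + (fun _ : 𝔻 => -l) z) := by
      funext z; simp [sub_eq_add_neg]
    rw [this, h', hconst, ← hl]; ring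
  have := hmul _ _ hgl hinv
  rw [c2, hconst, c1, zero_mul] at this
  exact one_ne_zero this

lemma char_eval (χ : (𝔻 → ℂ) → ℂ)
    (hadd : ∀ g h : 𝔻 → ℂ, MemHinf g → MemHinf h → χ (fun z => g z + h z) = χ g + χ h)
    (hmul : ∀ g h : 𝔻 → ℂ, MemHinf g → MemHinf h → χ (fun z => g z * h z) = χ g * χ h)
    (hconst : ∀ c : ℂ, χ (fun _ => c) = c)
    {w : ℂ} (hw : Complex.abs w < 1) (hχid : χ (fun z : 𝔻 => (z:ℂ)) = w)
    {g : 𝔻 → ℂ} (hg : MemHinf g) : χ g = g (UnitDisc.mk w hw) := by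
  set G := E g with hG
  have hGd : DifferentiableOn ℂ G 𝔹 := holOn_iff.1 hg.1
  have hwB : w ∈ 𝔹 := mem_B_iff.2 hw
  obtain ⟨M, hM⟩ := hg.2
  have hM0 : 0 ≤ M := le_trans (norm_nonneg _) (hM 0)
  set δ := (1 - Complex.abs w)/2 with hδdef
  have hδ : 0 < δ := by
    have := hw; unfold δ; linarith
  have hGb : ∀ y ∈ 𝔹, ‖G y‖ ≤ M := by
    intro y hy; rw [hG, E_apply_mem g hy]; exact hM _
  have hdsd : DifferentiableOn ℂ (dslope G w) 𝔹 :=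
    (Complex.differentiableOn_dslope (isOpen_ball.mem_nhds hwB)).2 hGd
  have case1 : ∀ y ∈ 𝔹, δ ≤ Complex.abs (y - w) → ‖dslope G w y‖ ≤ 2*M/δ := by
    intro y hy hyd
    have hyne : y ≠ w := by
      intro h0; rw [h0] at hyd; simpa using lt_of_lt_of_le hδ hyd
    rw [dslope_of_ne G hyne, slope_def_field, norm_div]
    have h1 : ‖G y - G w‖ ≤ 2*M := by
      have := norm_sub_le (G y) (G w)
      have h2 := hGb y hy; have h3 := hGb w hwB; linarith
    have h4 : δ ≤ ‖y - w‖ := by rw [Complex.norm_eq_abs]; exact hyd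
    exact div_le_div₀ (by linarith) h1 hδ h4
  have hsub : closedBall w δ ⊆ 𝔹 := by
    intro x hx
    rw [mem_closedBall, Complex.dist_eq, Complex.norm_eq_abs] at hx
    rw [mem_B_iff]
    calc Complex.abs x = Complex.abs (x - w + w) := by rw [sub_add_cancel]
      _ ≤ Complex.abs (x - w) + Complex.abs w := Complex.abs.add_le _ _
      _ ≤ δ + Complex.abs w := by linarith
      _ < 1 := by unfold δ; linarith
  have hkM : ∀ z : 𝔻, ‖dslope G w ↑z‖ ≤ 2*M/δ := by
    intro z
    by_cases hc : δ ≤ Complex.abs ((z:ℂ) - w)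
    · exact case1 _ (coe_mem_B z) hc
    · push_neg at hc
      have hd2 : DiffContOnCl ℂ (dslope G w) (ball w δ) := by
        apply DifferentiableOn.diffContOnCl
        rw [closure_ball w hδ.ne']
        exact hdsd.mono hsub
      have hfr : ∀ x ∈ frontier (ball w δ), ‖dslope G w x‖ ≤ 2*M/δ := by
        intro x hx
        rw [frontier_ball w hδ.ne'] at hx
        have hd : Complex.abs (x - w) = δ := by
          rw [mem_sphere, Complex.dist_eq] at hx; exact hx
        exact case1 x (hsub (sphere_subset_closedBall hx)) hd.ge
      exact Complex.norm_le_of_forall_mem_frontier_norm_le isBounded_ball hd2 hfr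
        (subset_closure (by rw [mem_ball, Complex.dist_eq]; exact hc))
  set k : 𝔻 → ℂ := fun z => dslope G w ↑z with hk
  have hkH : MemHinf k := ⟨⟨dslope G w, hdsd, fun _ => rfl⟩, 2*M/δ, hkM⟩
  have hrepr : g = fun z : 𝔻 => g (UnitDisc.mk w hw) + ((z:ℂ) - w) * k z := by
    funext z
    have h1 := sub_smul_dslope G w ↑z
    rw [smul_eq_mul] at h1
    have h2 : G ↑z = g z := E_coe g z
    have h3 : G w = g (UnitDisc.mk w hw) := E_apply g hw
    rw [hk]; dsimp only
    rw [← h2, ← h3]; linear_combination -h1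
  have hsw : MemHinf (fun z : 𝔻 => (z:ℂ) - w) := memHinf_sub_const memHinf_id w
  have hswk : MemHinf (fun z : 𝔻 => ((z:ℂ) - w) * k z) := memHinf_mul hsw hkH
  have hzero : χ (fun z : 𝔻 => (z:ℂ) - w) = 0 := by
    have h' := hadd (fun z : 𝔻 => (z:ℂ)) (fun _ => -w) memHinf_id (memHinf_const (-w))
    have heq : (fun z : 𝔻 => (z:ℂ) - w) =
        (fun z : 𝔻 => (fun z : 𝔻 => (z:ℂ)) z + (fun _ : 𝔻 => -w) z) := by
      funext z; simp [sub_eq_add_neg]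
    rw [heq, h', hconst, hχid]; ring
  calc χ g = χ (fun z : 𝔻 => (fun _ : 𝔻 => g (UnitDisc.mk w hw)) z +
        (fun z : 𝔻 => ((z:ℂ) - w) * k z) z) := by rw [← hrepr]
    _ = g (UnitDisc.mk w hw) + χ (fun z : 𝔻 => ((z:ℂ) - w) * k z) := by
        rw [hadd _ _ (memHinf_const _) hswk, hconst]
    _ = g (UnitDisc.mk w hw) + χ (fun z : 𝔻 => (z:ℂ) - w) * χ k := by
        rw [hmul _ _ hsw hkH]
    _ = g (UnitDisc.mk w hw) := by rw [hzero]; ring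


/-- `ψ · g` as a disc function. -/
def P (ψ g : 𝔻 → ℂ) : 𝔻 → ℂ := fun z => ψ z * g z

lemma P_mem {ψ g : 𝔻 → ℂ} (hg : MemHinf g) : P ψ g ∈ psiH ψ := ⟨g, hg, rfl⟩

lemma P_memHinf {ψ g : 𝔻 → ℂ} (hψ : MemHinf ψ) (hg : MemHinf g) : MemHinf (P ψ g) :=
  memHinf_mul hψ hg

lemma psiH_subset_Hinf {ψ : 𝔻 → ℂ} (hψ : MemHinf ψ) {f : 𝔻 → ℂ} (hf : f ∈ psiH ψ) :
    MemHinf f := by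
  obtain ⟨g, hg, rfl⟩ := hf
  exact memHinf_mul hψ hg

lemma zero_mem_psiH {ψ : 𝔻 → ℂ} : (0 : 𝔻 → ℂ) ∈ psiH ψ :=
  ⟨fun _ => 0, memHinf_const 0, by funext z; simp⟩

lemma T_zero {ψ : 𝔻 → ℂ} {T : (𝔻 → ℂ) → (𝔻 → ℂ)} (hT : IsAlgAutOn (psiH ψ) T) :
    T 0 = 0 := by
  obtain ⟨-, hadd, -, -, -, -⟩ := hT
  have h := hadd 0 zero_mem_psiH 0 zero_mem_psiH
  rw [add_zero] at h
  exact (left_eq_add.mp h)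

section MainRep

variable {ψ : 𝔻 → ℂ} {T : (𝔻 → ℂ) → (𝔻 → ℂ)}

lemma TP1_ne (hψ : MemHinf ψ) (hne : ∃ z, ψ z ≠ 0) (hT : IsAlgAutOn (psiH ψ) T) :
    ∃ z ∈ 𝔹, E (T (P ψ (fun _ => 1))) z ≠ 0 := by
  by_contra hc
  push_neg at hc
  have hz : T (P ψ (fun _ => 1)) = 0 := by
    funext ζ
    have := hc ↑ζ (coe_mem_B ζ)
    rwa [E_coe] at this
  have h0 : T (P ψ (fun _ => 1)) = T 0 := by rw [hz, T_zero hT]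
  have := hT.2.2.2.2.1 (P_mem memHinf_one) zero_mem_psiH h0
  obtain ⟨z, hzne⟩ := hne
  have : P ψ (fun _ => 1) z = 0 := by rw [this]; rfl
  rw [P] at this
  simp at this
  exact hzne this

theorem main_rep (hψ : MemHinf ψ) (hne : ∃ z, ψ z ≠ 0) (hT : IsAlgAutOn (psiH ψ) T) :
    ∃ Φ : ℂ → ℂ, DifferentiableOn ℂ Φ 𝔹 ∧ (∀ z ∈ 𝔹, Complex.abs (Φ z) < 1) ∧
      (∀ z ∈ 𝔹, E ψ (Φ z) = E (T (P ψ (fun _ => 1))) z) ∧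
      (∀ g : 𝔻 → ℂ, MemHinf g → ∀ z ∈ 𝔹,
        E (T (P ψ g)) z = E (T (P ψ (fun _ => 1))) z * E g (Φ z)) := by
  obtain ⟨hTmap, hTadd, hTsmul, hTmul, hTinj, hTsurj⟩ := hT
  have hTfull : IsAlgAutOn (psiH ψ) T := ⟨hTmap, hTadd, hTsmul, hTmul, hTinj, hTsurj⟩
  set onef : 𝔻 → ℂ := fun _ => 1 with honef
  set idf : 𝔻 → ℂ := fun z => (z : ℂ) with hidf
  have h1H : MemHinf onef := memHinf_one
  have hidH : MemHinf idf := memHinf_id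
  set D : ℂ → ℂ := E (T (P ψ onef)) with hD
  set N : ℂ → ℂ := E (T (P ψ idf)) with hN
  have hTgH : ∀ {g : 𝔻 → ℂ}, MemHinf g → MemHinf (T (P ψ g)) := fun hg =>
    psiH_subset_Hinf hψ (hTmap _ (P_mem hg))
  have hDd : DifferentiableOn ℂ D 𝔹 := holOn_iff.1 (hTgH h1H).1
  have hNd : DifferentiableOn ℂ N 𝔹 := holOn_iff.1 (hTgH hidH).1
  have hDne : ∃ z ∈ 𝔹, D z ≠ 0 := TP1_ne hψ hne hTfull
  -- additivity of T on P-functions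
  have Padd : ∀ g h : 𝔻 → ℂ, P ψ g + P ψ h = P ψ (fun z => g z + h z) := by
    intro g h; funext z; simp [P, mul_add]
  have hTPadd : ∀ g h : 𝔻 → ℂ, MemHinf g → MemHinf h →
      T (P ψ (fun z => g z + h z)) = T (P ψ g) + T (P ψ h) := by
    intro g h hg hh
    rw [← Padd, hTadd _ (P_mem hg) _ (P_mem hh)]
  -- scalars
  have Psmul : ∀ c : ℂ, c • P ψ onef = P ψ (fun _ => c) := by
    intro c; funext z; simp [P, honef]; ring
  have hTPconst : ∀ c : ℂ, T (P ψ (fun _ => c)) = c • T (P ψ onef) := by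
    intro c
    rw [← Psmul, hTsmul c _ (P_mem h1H)]
  -- key multiplicative identity
  have Pmul : ∀ g h : 𝔻 → ℂ, P ψ g * P ψ h = P ψ onef * P ψ (fun z => g z * h z) := by
    intro g h; funext z; simp [P, honef]; ring
  have KEY : ∀ g h : 𝔻 → ℂ, MemHinf g → MemHinf h → ∀ z ∈ 𝔹,
      D z * E (T (P ψ (fun w => g w * h w))) z = E (T (P ψ g)) z * E (T (P ψ h)) z := by
    intro g h hg hh z hz
    have hgh : MemHinf (fun w => g w * h w) := memHinf_mul hg hh
    have e1 : T (P ψ g) * T (P ψ h) = T (P ψ onef) * T (P ψ (fun w => g w * h w)) := by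
      rw [← hTmul _ (P_mem hg) _ (P_mem hh), ← hTmul _ (P_mem h1H) _ (P_mem hgh), Pmul]
    have e2 := congrFun e1 (UnitDisc.mk z (mem_B_iff.1 hz))
    have hx : Complex.abs z < 1 := mem_B_iff.1 hz
    rw [hD, hN] at *
    rw [E_apply _ hx, E_apply _ hx, E_apply _ hx, E_apply _ hx]
    exact (by simpa [Pi.mul_apply] using e2.symm)
  -- character properties at a point where D ≠ 0
  have hχadd : ∀ z ∈ 𝔹, D z ≠ 0 → ∀ g h : 𝔻 → ℂ, MemHinf g → MemHinf h →
      E (T (P ψ (fun w => g w + h w))) z / D z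
        = E (T (P ψ g)) z / D z + E (T (P ψ h)) z / D z := by
    intro z hz hDz g h hg hh
    rw [hTPadd g h hg hh]
    have hx : Complex.abs z < 1 := mem_B_iff.1 hz
    rw [E_apply _ hx, E_apply _ hx, E_apply _ hx, Pi.add_apply, add_div]
  have hχconst : ∀ z ∈ 𝔹, D z ≠ 0 → ∀ c : ℂ,
      E (T (P ψ (fun _ => c))) z / D z = c := by
    intro z hz hDz c
    rw [hTPconst c]
    have hx : Complex.abs z < 1 := mem_B_iff.1 hz
    rw [E_apply _ hx]
    have : (c • T (P ψ onef)) (UnitDisc.mk z hx) = c * T (P ψ onef) (UnitDisc.mk z hx) := rfl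
    rw [this, ← E_apply (T (P ψ onef)) hx, ← hD, mul_div_assoc, div_self hDz, mul_one]
  have hχmul : ∀ z ∈ 𝔹, D z ≠ 0 → ∀ g h : 𝔻 → ℂ, MemHinf g → MemHinf h →
      E (T (P ψ (fun w => g w * h w))) z / D z
        = (E (T (P ψ g)) z / D z) * (E (T (P ψ h)) z / D z) := by
    intro z hz hDz g h hg hh
    have := KEY g h hg hh z hz
    field_simp
    linear_combination this
  -- |N z / D z| ≤ 1
  have hw_le : ∀ z ∈ 𝔹, D z ≠ 0 → ‖N z / D z‖ ≤ 1 := by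
    intro z hz hDz
    have : N z / D z = (fun g : 𝔻 → ℂ => E (T (P ψ g)) z / D z) idf := rfl
    rw [this]
    refine char_norm_le (fun g : 𝔻 → ℂ => E (T (P ψ g)) z / D z)
      (hχadd z hz hDz) (hχmul z hz hDz) (hχconst z hz hDz) hidH ?_
    intro ζ
    rw [hidf]
    simp only [Complex.norm_eq_abs]
    exact (UnitDisc.norm_lt_one ζ).le
  -- impossibility of N = η D with |η| = 1
  have hno : ∀ η : ℂ, Complex.abs η = 1 → (∀ z ∈ 𝔹, N z = η * D z) → False := by
    intro η hη hND
    have hfun : T (P ψ idf) = T (P ψ (fun _ => η)) := by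
      rw [hTPconst η]
      funext ζ
      have h1 := hND ↑ζ (coe_mem_B ζ)
      rw [hN, hD, E_coe, E_coe] at h1
      rw [h1]; rfl
    have heq := hTinj (P_mem hidH) (P_mem (memHinf_const η)) hfun
    obtain ⟨z₁, hz₁⟩ := hne
    apply hz₁
    have : ∀ ζ : 𝔻, ψ ζ * (ζ : ℂ) = ψ ζ * η := fun ζ => congrFun heq ζ
    have h2 := this z₁
    rcases mul_eq_zero.1 (by linear_combination h2 : ψ z₁ * ((z₁ : ℂ) - η) = 0) with h | h
    · exact h
    · exfalso
      have hzeta : (z₁ : ℂ) = η := by linear_combination h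
      have habs : Complex.abs (z₁ : ℂ) < 1 := UnitDisc.norm_lt_one z₁
      rw [hzeta, hη] at habs
      exact lt_irrefl _ habs
  -- strict inequality
  have hw_lt : ∀ z ∈ 𝔹, D z ≠ 0 → Complex.abs (N z / D z) < 1 := by
    intro z₀ hz₀ hDz₀
    rcases lt_or_eq_of_le (hw_le z₀ hz₀ hDz₀) with h | h
    · rwa [Complex.norm_eq_abs] at h
    exfalso
    set φv : ℂ → ℂ := fun z => N z / D z with hφv
    have hDc : ContinuousAt D z₀ := (hDd.differentiableAt (isOpen_ball.mem_nhds hz₀)).continuousAt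
    have hevB : ∀ᶠ y in nhds z₀, y ∈ 𝔹 := isOpen_ball.mem_nhds hz₀
    have hevD : ∀ᶠ y in nhds z₀, D y ≠ 0 := hDc.eventually_ne hDz₀
    have hev_diff : ∀ᶠ y in nhds z₀, DifferentiableAt ℂ φv y := by
      filter_upwards [hevB, hevD] with y hyB hyD
      exact ((hNd.differentiableAt (isOpen_ball.mem_nhds hyB)).div
        (hDd.differentiableAt (isOpen_ball.mem_nhds hyB)) hyD)
    have hmax : IsLocalMax (norm ∘ φv) z₀ := by
      filter_upwards [hevB, hevD] with y hyB hyD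
      show ‖φv y‖ ≤ ‖φv z₀‖
      rw [hφv]; dsimp only
      rw [show ‖N z₀ / D z₀‖ = 1 from h.symm ▸ rfl]
      exact hw_le y hyB hyD
    have hloc := Complex.eventually_eq_of_isLocalMax_norm hev_diff hmax
    set η := φv z₀ with hη
    have hη1 : Complex.abs η = 1 := by
      have : ‖φv z₀‖ = 1 := h.symm ▸ rfl
      rwa [Complex.norm_eq_abs] at this
    have hev0 : ∀ᶠ y in nhds z₀, N y - η * D y = 0 := by
      filter_upwards [hloc, hevD] with y hy hyD
      have : N y / D y = η := hy
      field_simp at this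
      linear_combination this
    have hNηD : ∀ z ∈ 𝔹, N z - η * D z = 0 := by
      have hana : AnalyticOnNhd ℂ (fun z => N z - η * D z) 𝔹 :=
        ((hNd.sub ((differentiableOn_const η).mul hDd)).analyticOnNhd isOpen_ball)
      exact fun z hz => hana.eqOn_zero_of_preconnected_of_eventuallyEq_zero
        (convex_ball (0:ℂ) 1).isPreconnected hz₀ hev0 hz
    exact hno η hη1 (fun z hz => by linear_combination hNηD z hz)
  -- evaluation formula off zeros of D
  have heval : ∀ z ∈ 𝔹, D z ≠ 0 → ∀ g : 𝔻 → ℂ, MemHinf g →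
      E (T (P ψ g)) z = D z * E g (N z / D z) := by
    intro z hz hDz g hg
    have hwlt := hw_lt z hz hDz
    have hχ := char_eval (fun g : 𝔻 → ℂ => E (T (P ψ g)) z / D z)
      (hχadd z hz hDz) (hχmul z hz hDz) (hχconst z hz hDz) hwlt rfl hg
    rw [E_apply _ hwlt]
    have := hχ
    field_simp at this
    linear_combination this
  -- global analytic Φ via removable singularities
  classical
  set q : ℂ → ℂ := fun w => N w / D w with hq
  set Φ : ℂ → ℂ := fun z => if z ∈ 𝔹 ∧ D z ≠ 0 then q z else
    Filter.limUnder (nhdsWithin z {z}ᶜ) q with hΦdef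
  have hΦeq : ∀ z ∈ 𝔹, D z ≠ 0 → Φ z = q z := by
    intro z hz hDz
    simp only [hΦdef]
    exact if_pos ⟨hz, hDz⟩
  -- around a zero of D inside 𝔹, D is nonzero on a punctured ball
  have hpunct : ∀ z₀ ∈ 𝔹, ∃ r > 0, ball z₀ r ⊆ 𝔹 ∧
      ∀ w ∈ ball z₀ r, w ≠ z₀ → D w ≠ 0 := by
    intro z₀ hz₀
    have hana : AnalyticAt ℂ D z₀ := (hDd.analyticOnNhd isOpen_ball) z₀ hz₀
    rcases hana.eventually_eq_zero_or_eventually_ne_zero with hcase | hcase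
    · exfalso
      obtain ⟨z₁, hz₁B, hz₁⟩ := hDne
      exact hz₁ ((hDd.analyticOnNhd isOpen_ball).eqOn_zero_of_preconnected_of_eventuallyEq_zero
        (convex_ball (0:ℂ) 1).isPreconnected hz₀ hcase hz₁B)
    · have hev : ∀ᶠ w in nhds z₀, w ∈ 𝔹 ∧ (w ≠ z₀ → D w ≠ 0) :=
        (isOpen_ball.eventually_mem hz₀).and (eventually_nhdsWithin_iff.1 hcase)
      rcases Metric.eventually_nhds_iff_ball.1 hev with ⟨r, hr0, hr⟩
      exact ⟨r, hr0, fun w hw => (hr w hw).1, fun w hw => (hr w hw).2⟩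
  have hΦdiff : DifferentiableOn ℂ Φ 𝔹 := by
    intro z₀ hz₀
    apply DifferentiableAt.differentiableWithinAt
    by_cases hDz₀ : D z₀ = 0
    · obtain ⟨r, hr0, hrB, hrD⟩ := hpunct z₀ hz₀
      have hqd : DifferentiableOn ℂ q (ball z₀ r \ {z₀}) := by
        rintro w ⟨hw, hwne⟩
        apply DifferentiableAt.differentiableWithinAt
        have hwB : w ∈ 𝔹 := hrB hw
        exact (hNd.differentiableAt (isOpen_ball.mem_nhds hwB)).div
          (hDd.differentiableAt (isOpen_ball.mem_nhds hwB))
          (hrD w hw (by simpa using hwne))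
      have hqb : BddAbove (norm ∘ q '' (ball z₀ r \ {z₀})) := by
        refine ⟨1, ?_⟩
        rintro x ⟨w, ⟨hw, hwne⟩, rfl⟩
        exact hw_le w (hrB hw) (hrD w hw (by simpa using hwne))
      have hupd := Complex.differentiableOn_update_limUnder_of_bddAbove
        (ball_mem_nhds z₀ hr0) hqd hqb
      have hΦev : Set.EqOn Φ
          (Function.update q z₀ (Filter.limUnder (nhdsWithin z₀ {z₀}ᶜ) q)) (ball z₀ r) := by
        intro w hw
        by_cases hwz : w = z₀
        · subst hwz
          rw [Function.update_self]
          simp only [hΦdef]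
          rw [if_neg (by simp [hDz₀])]
        · rw [Function.update_of_ne hwz,
            hΦeq w (hrB hw) (hrD w hw hwz)]
      have hud : DifferentiableAt ℂ
          (Function.update q z₀ (Filter.limUnder (nhdsWithin z₀ {z₀}ᶜ) q)) z₀ :=
        hupd.differentiableAt (ball_mem_nhds z₀ hr0)
      exact (Filter.EventuallyEq.differentiableAt_iff
        (hΦev.eventuallyEq_of_mem (ball_mem_nhds z₀ hr0))).2 hud
    · have hev : ∀ᶠ w in nhds z₀, Φ w = q w := by
        have h1 : ∀ᶠ w in nhds z₀, w ∈ 𝔹 := isOpen_ball.mem_nhds hz₀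
        have h2 : ∀ᶠ w in nhds z₀, D w ≠ 0 :=
          ((hDd.differentiableAt (isOpen_ball.mem_nhds hz₀)).continuousAt).eventually_ne hDz₀
        filter_upwards [h1, h2] with w hw1 hw2 using hΦeq w hw1 hw2
      have hqd : DifferentiableAt ℂ q z₀ :=
        (hNd.differentiableAt (isOpen_ball.mem_nhds hz₀)).div
          (hDd.differentiableAt (isOpen_ball.mem_nhds hz₀)) hDz₀
      exact (Filter.EventuallyEq.differentiableAt_iff hev).2 hqd
  have hΦle : ∀ z ∈ 𝔹, ‖Φ z‖ ≤ 1 := by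
    intro z₀ hz₀
    by_cases hDz₀ : D z₀ = 0
    · obtain ⟨r, hr0, hrB, hrD⟩ := hpunct z₀ hz₀
      have hct : ContinuousAt Φ z₀ :=
        (hΦdiff.differentiableAt (isOpen_ball.mem_nhds hz₀)).continuousAt
      have htd : Filter.Tendsto Φ (nhdsWithin z₀ {z₀}ᶜ) (nhds (Φ z₀)) :=
        hct.continuousWithinAt.tendsto
      refine le_of_tendsto (htd.norm) ?_
      have hev : ∀ᶠ w in nhdsWithin z₀ {z₀}ᶜ, ‖Φ w‖ ≤ 1 := by
        have h1 : ∀ᶠ w in nhdsWithin z₀ {z₀}ᶜ, w ∈ ball z₀ r :=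
          Filter.Eventually.filter_mono nhdsWithin_le_nhds (ball_mem_nhds z₀ hr0)
        have h2 : ∀ᶠ w in nhdsWithin z₀ {z₀}ᶜ, w ∈ ({z₀}ᶜ : Set ℂ) :=
          self_mem_nhdsWithin
        filter_upwards [h1, h2] with w hw1 hw2
        have hwne : w ≠ z₀ := by simpa using hw2
        rw [hΦeq w (hrB hw1) (hrD w hw1 hwne)]
        exact hw_le w (hrB hw1) (hrD w hw1 hwne)
      exact hev
    · rw [hΦeq z₀ hz₀ hDz₀]; exact hw_le z₀ hz₀ hDz₀
  have hΦlt : ∀ z ∈ 𝔹, Complex.abs (Φ z) < 1 := by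
    intro z₀ hz₀
    by_cases hDz₀ : D z₀ = 0
    swap
    · rw [hΦeq z₀ hz₀ hDz₀]; exact hw_lt z₀ hz₀ hDz₀
    rcases lt_or_eq_of_le (hΦle z₀ hz₀) with h | h
    · rwa [Complex.norm_eq_abs] at h
    exfalso
    obtain ⟨r, hr0, hrB, hrD⟩ := hpunct z₀ hz₀
    have hev_diff : ∀ᶠ y in nhds z₀, DifferentiableAt ℂ Φ y := by
      filter_upwards [isOpen_ball.mem_nhds hz₀] with y hy
      exact hΦdiff.differentiableAt (isOpen_ball.mem_nhds hy)
    have hmax : IsLocalMax (norm ∘ Φ) z₀ := by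
      filter_upwards [isOpen_ball.mem_nhds hz₀] with y hy
      show ‖Φ y‖ ≤ ‖Φ z₀‖
      rw [h]
      exact hΦle y hy
    have hloc := Complex.eventually_eq_of_isLocalMax_norm hev_diff hmax
    set η := Φ z₀ with hηdef
    have hη1 : Complex.abs η = 1 := by rw [← h]; rfl
    have hfreq : ∃ᶠ y in nhdsWithin z₀ {z₀}ᶜ, N y - η * D y = 0 := by
      have hev : ∀ᶠ y in nhdsWithin z₀ {z₀}ᶜ, N y - η * D y = 0 := by
        have h1 : ∀ᶠ w in nhdsWithin z₀ {z₀}ᶜ, w ∈ ball z₀ r :=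
          Filter.Eventually.filter_mono nhdsWithin_le_nhds (ball_mem_nhds z₀ hr0)
        have h2 : ∀ᶠ w in nhdsWithin z₀ {z₀}ᶜ, w ∈ ({z₀}ᶜ : Set ℂ) := self_mem_nhdsWithin
        have h3 : ∀ᶠ w in nhdsWithin z₀ {z₀}ᶜ, Φ w = η :=
          Filter.Eventually.filter_mono nhdsWithin_le_nhds hloc
        filter_upwards [h1, h2, h3] with w hw1 hw2 hw3
        have hwne : w ≠ z₀ := by simpa using hw2
        have hDw : D w ≠ 0 := hrD w hw1 hwne
        have : q w = η := by rw [← hΦeq w (hrB hw1) hDw]; exact hw3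
        rw [hq] at this
        field_simp at this
        linear_combination this
      exact hev.frequently
    have hana : AnalyticOnNhd ℂ (fun y => N y - η * D y) 𝔹 :=
      ((hNd.sub ((differentiableOn_const η).mul hDd)).analyticOnNhd isOpen_ball)
    have hzero := hana.eqOn_zero_of_preconnected_of_frequently_eq_zero
      (convex_ball (0:ℂ) 1).isPreconnected hz₀ hfreq
    refine hno η hη1 (fun z hz => ?_)
    have h0 : N z - η * D z = 0 := hzero hz
    linear_combination h0
  -- representation formula on all of 𝔹
  have hrep : ∀ g : 𝔻 → ℂ, MemHinf g → ∀ z ∈ 𝔹,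
      E (T (P ψ g)) z = D z * E g (Φ z) := by
    intro g hg
    have hβd : DifferentiableOn ℂ (fun z => D z * E g (Φ z)) 𝔹 := by
      apply hDd.mul
      exact (holOn_iff.1 hg.1).comp hΦdiff (fun z hz => mem_B_iff.2 (hΦlt z hz))
    refine eq_off_zeros (holOn_iff.1 (hTgH hg).1) hβd hDd hDne ?_
    intro z hz hDz
    rw [heval z hz hDz g hg, hΦeq z hz hDz]
  -- R1 : ψ ∘ Φ = D
  have hR1 : ∀ z ∈ 𝔹, E ψ (Φ z) = D z := by
    have hsq : ∀ z ∈ 𝔹, D z * E ψ (Φ z) = D z * D z := by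
      intro z hz
      have h1 := hrep ψ hψ z hz
      have ePP : (P ψ onef) * (P ψ onef) = P ψ ψ := by
        funext w; simp [P, honef]
      have e1 : T (P ψ onef) * T (P ψ onef) = T (P ψ ψ) := by
        rw [← hTmul _ (P_mem h1H) _ (P_mem h1H), ePP]
      have e2 := congrFun e1 (UnitDisc.mk z (mem_B_iff.1 hz))
      have hx : Complex.abs z < 1 := mem_B_iff.1 hz
      rw [← h1, hD, E_apply _ hx, E_apply _ hx]
      exact e2.symm
    have := eq_off_zeros
      ((holOn_iff.1 hψ.1).comp hΦdiff (fun z hz => mem_B_iff.2 (hΦlt z hz)))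
      hDd hDd hDne (fun z hz hDz => by
        have := hsq z hz
        exact mul_left_cancel₀ hDz this)
    exact this
  exact ⟨Φ, hΦdiff, hΦlt, hR1, hrep⟩


end MainRep

section Inverse

variable {ψ : 𝔻 → ℂ} {T : (𝔻 → ℂ) → (𝔻 → ℂ)}

lemma psiH_add {f g : 𝔻 → ℂ} (hf : f ∈ psiH ψ) (hg : g ∈ psiH ψ) : f + g ∈ psiH ψ := by
  obtain ⟨g₁, hg₁, rfl⟩ := hf
  obtain ⟨g₂, hg₂, rfl⟩ := hg
  exact ⟨fun z => g₁ z + g₂ z, memHinf_add hg₁ hg₂, by funext z; simp [mul_add]⟩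

lemma psiH_smul (c : ℂ) {f : 𝔻 → ℂ} (hf : f ∈ psiH ψ) : c • f ∈ psiH ψ := by
  obtain ⟨g₁, hg₁, rfl⟩ := hf
  exact ⟨fun z => c * g₁ z, memHinf_const_mul hg₁ c, by funext z; simp; ring⟩

lemma psiH_mul (hψ : MemHinf ψ) {f g : 𝔻 → ℂ} (hf : f ∈ psiH ψ) (hg : g ∈ psiH ψ) :
    f * g ∈ psiH ψ := by
  obtain ⟨g₁, hg₁, rfl⟩ := hf
  obtain ⟨g₂, hg₂, rfl⟩ := hg
  exact ⟨fun z => g₁ z * (ψ z * g₂ z), memHinf_mul hg₁ (memHinf_mul hψ hg₂),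
    by funext z; simp; ring⟩

lemma inverse_aut (hψ : MemHinf ψ) (hT : IsAlgAutOn (psiH ψ) T) :
    ∃ T' : (𝔻 → ℂ) → (𝔻 → ℂ), IsAlgAutOn (psiH ψ) T' ∧
      (∀ f ∈ psiH ψ, T' (T f) = f) ∧ (∀ f ∈ psiH ψ, T (T' f) = f) := by
  classical
  obtain ⟨hTmap, hTadd, hTsmul, hTmul, hTinj, hTsurj⟩ := hT
  have hex : ∀ f ∈ psiH ψ, ∃ x, x ∈ psiH ψ ∧ T x = f := by
    intro f hf
    rcases hTsurj hf with ⟨x, hx, hTx⟩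
    exact ⟨x, hx, hTx⟩
  set T' : (𝔻 → ℂ) → (𝔻 → ℂ) := fun f =>
    if h : f ∈ psiH ψ then (hex f h).choose else f with hT'def
  have hT'mem : ∀ f ∈ psiH ψ, T' f ∈ psiH ψ := by
    intro f hf
    simp only [hT'def, dif_pos hf]
    exact (hex f hf).choose_spec.1
  have hTT' : ∀ f ∈ psiH ψ, T (T' f) = f := by
    intro f hf
    simp only [hT'def, dif_pos hf]
    exact (hex f hf).choose_spec.2
  have hT'T : ∀ f ∈ psiH ψ, T' (T f) = f := by
    intro f hf
    have hTf : T f ∈ psiH ψ := hTmap f hf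
    exact hTinj (hT'mem _ hTf) hf (hTT' _ hTf)
  have hT'inj : Set.InjOn T' (psiH ψ) := by
    intro f hf g hg h
    rw [← hTT' f hf, ← hTT' g hg, h]
  have hT'surj : Set.SurjOn T' (psiH ψ) (psiH ψ) := by
    intro f hf
    exact ⟨T f, hTmap f hf, hT'T f hf⟩
  have hT'add : ∀ f ∈ psiH ψ, ∀ g ∈ psiH ψ, T' (f + g) = T' f + T' g := by
    intro f hf g hg
    have h1 : T (T' (f + g)) = T (T' f + T' g) := by
      rw [hTT' _ (psiH_add hf hg), hTadd _ (hT'mem f hf) _ (hT'mem g hg),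
        hTT' f hf, hTT' g hg]
    exact hTinj (hT'mem _ (psiH_add hf hg)) (psiH_add (hT'mem f hf) (hT'mem g hg)) h1
  have hT'smul : ∀ (c : ℂ), ∀ f ∈ psiH ψ, T' (c • f) = c • T' f := by
    intro c f hf
    have h1 : T (T' (c • f)) = T (c • T' f) := by
      rw [hTT' _ (psiH_smul c hf), hTsmul c _ (hT'mem f hf), hTT' f hf]
    exact hTinj (hT'mem _ (psiH_smul c hf)) (psiH_smul c (hT'mem f hf)) h1
  have hT'mul : ∀ f ∈ psiH ψ, ∀ g ∈ psiH ψ, T' (f * g) = T' f * T' g := by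
    intro f hf g hg
    have h1 : T (T' (f * g)) = T (T' f * T' g) := by
      rw [hTT' _ (psiH_mul hψ hf hg), hTmul _ (hT'mem f hf) _ (hT'mem g hg),
        hTT' f hf, hTT' g hg]
    exact hTinj (hT'mem _ (psiH_mul hψ hf hg))
      (psiH_mul hψ (hT'mem f hf) (hT'mem g hg)) h1
  exact ⟨T', ⟨hT'mem, hT'add, hT'smul, hT'mul, hT'inj, hT'surj⟩, hT'T, hTT'⟩

end Inverse

section Schwarz

/-- The Möbius involution τ_a. -/
noncomputable def tau (a z : ℂ) : ℂ := (a - z) / (1 - (starRingEnd ℂ) a * z)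

lemma normSq_mobius_key (a z : ℂ) :
    Complex.normSq (1 - (starRingEnd ℂ) a * z) - Complex.normSq (a - z)
      = (1 - Complex.normSq a) * (1 - Complex.normSq z) := by
  simp [Complex.normSq_apply, Complex.mul_re, Complex.mul_im, Complex.sub_re,
    Complex.sub_im, Complex.one_re, Complex.one_im, Complex.conj_re, Complex.conj_im]
  ring

lemma tau_den_ne {a z : ℂ} (ha : Complex.abs a < 1) (hz : Complex.abs z < 1) :
    (1 : ℂ) - (starRingEnd ℂ) a * z ≠ 0 := by
  intro h
  have h1 : (starRingEnd ℂ) a * z = 1 := by linear_combination -h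
  have h2 : Complex.abs ((starRingEnd ℂ) a * z) = 1 := by rw [h1]; simp
  rw [map_mul, Complex.abs_conj] at h2
  nlinarith [Complex.abs.nonneg a, Complex.abs.nonneg z]

lemma tau_maps {a z : ℂ} (ha : Complex.abs a < 1) (hz : Complex.abs z < 1) :
    Complex.abs (tau a z) < 1 := by
  have hden := tau_den_ne ha hz
  have hkey := normSq_mobius_key a z
  have h1 : Complex.normSq a < 1 := by
    rw [← Complex.sq_abs]; nlinarith [Complex.abs.nonneg a]
  have h2 : Complex.normSq z < 1 := by
    rw [← Complex.sq_abs]; nlinarith [Complex.abs.nonneg z]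
  have h3 : 0 < Complex.normSq (1 - (starRingEnd ℂ) a * z) := by
    rwa [Complex.normSq_pos]
  have h4 : Complex.normSq (a - z) < Complex.normSq (1 - (starRingEnd ℂ) a * z) := by
    nlinarith
  have h5 : Complex.abs (tau a z) ^ 2 < 1 := by
    rw [Complex.sq_abs, tau, Complex.normSq_div]
    rw [div_lt_one h3]
    exact h4
  nlinarith [Complex.abs.nonneg (tau a z)]

lemma tau_invol {a z : ℂ} (ha : Complex.abs a < 1) (hz : Complex.abs z < 1) :
    tau a (tau a z) = z := by
  have hden := tau_den_ne ha hz
  have hna : (1 : ℂ) - (starRingEnd ℂ) a * a ≠ 0 := by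
    intro h
    have h1 : (starRingEnd ℂ) a * a = 1 := by linear_combination -h
    have h2 : Complex.abs ((starRingEnd ℂ) a * a) = 1 := by rw [h1]; simp
    rw [map_mul, Complex.abs_conj] at h2
    nlinarith [Complex.abs.nonneg a]
  have hna' : (1 : ℂ) - a * (starRingEnd ℂ) a ≠ 0 := by
    rw [mul_comm]; exact hna
  rw [tau, tau]
  have e1 : a - (a - z) / (1 - (starRingEnd ℂ) a * z)
      = z * (1 - (starRingEnd ℂ) a * a) / (1 - (starRingEnd ℂ) a * z) := by
    rw [eq_div_iff hden, sub_mul, div_mul_cancel₀ _ hden]; ring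
  have e2 : 1 - (starRingEnd ℂ) a * ((a - z) / (1 - (starRingEnd ℂ) a * z))
      = (1 - (starRingEnd ℂ) a * a) / (1 - (starRingEnd ℂ) a * z) := by
    rw [eq_div_iff hden, sub_mul, mul_div_assoc', div_mul_cancel₀ _ hden]; ring
  rw [e1, e2, div_div_div_cancel_right₀ hden, mul_div_assoc, div_self hna, mul_one]

lemma tau_zero (a : ℂ) : tau a a = 0 := by simp [tau]

lemma tau_at_zero (a : ℂ) : tau a 0 = a := by simp [tau]

lemma tau_diff {a : ℂ} (ha : Complex.abs a < 1) : DifferentiableOn ℂ (tau a) 𝔹 := by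
  apply DifferentiableOn.div
  · exact (differentiableOn_const a).sub differentiableOn_id
  · exact (differentiableOn_const 1).sub ((differentiableOn_const _).mul differentiableOn_id)
  · intro z hz; exact tau_den_ne ha (mem_B_iff.1 hz)

lemma schwarz_two_fixed {Φ : ℂ → ℂ} (hΦd : DifferentiableOn ℂ Φ 𝔹)
    (hΦlt : ∀ z ∈ 𝔹, Complex.abs (Φ z) < 1)
    {a b : ℂ} (ha : a ∈ 𝔹) (hb : b ∈ 𝔹) (hab : a ≠ b)
    (hfa : Φ a = a) (hfb : Φ b = b) : ∀ z ∈ 𝔹, Φ z = z := by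
  have haa : Complex.abs a < 1 := mem_B_iff.1 ha
  have hba : Complex.abs b < 1 := mem_B_iff.1 hb
  set h : ℂ → ℂ := fun z => tau a (Φ (tau a z)) with hh
  have htauB : ∀ z ∈ 𝔹, tau a z ∈ 𝔹 := fun z hz => mem_B_iff.2 (tau_maps haa (mem_B_iff.1 hz))
  have hhd : DifferentiableOn ℂ h 𝔹 := by
    apply (tau_diff haa).comp
    · exact hΦd.comp (tau_diff haa) htauB
    · intro z hz
      exact mem_B_iff.2 (hΦlt _ (htauB z hz))
  have hhB : ∀ z ∈ 𝔹, Complex.abs (h z) < 1 := by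
    intro z hz
    exact tau_maps haa (hΦlt _ (htauB z hz))
  have hh0 : h 0 = 0 := by rw [hh]; dsimp only; rw [tau_at_zero, hfa, tau_zero]
  set c₀ := tau a b with hc₀
  have hc₀B : c₀ ∈ 𝔹 := htauB b hb
  have hc₀ne : c₀ ≠ 0 := by
    rw [hc₀, tau]
    intro hc
    rcases div_eq_zero_iff.1 hc with hc' | hc'
    · exact hab (by linear_combination hc')
    · exact tau_den_ne haa hba hc'
  have hhc₀ : h c₀ = c₀ := by
    rw [hh]; dsimp only
    rw [show tau a c₀ = b from by rw [hc₀]; exact tau_invol haa hba, hfb]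
  -- Schwarz: the dslope is bounded by 1
  have h0B : (0:ℂ) ∈ 𝔹 := by simp [mem_B_iff]
  set Q := dslope h 0 with hQ
  have hQd : DifferentiableOn ℂ Q 𝔹 :=
    (Complex.differentiableOn_dslope (isOpen_ball.mem_nhds h0B)).2 hhd
  have hQval : ∀ x : ℂ, x ≠ 0 → Q x = x⁻¹ * h x := by
    intro x hx
    rw [hQ, dslope_of_ne h hx, slope_def_field, hh0 ]
    rw [div_eq_inv_mul, sub_zero, sub_zero]
  have hQ1 : ∀ z ∈ 𝔹, ‖Q z‖ ≤ 1 := by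
    intro z hz
    have claim : ∀ r : ℝ, Complex.abs z < r → r < 1 → ‖Q z‖ ≤ 1/r := by
      intro r hzr hr1
      have hr0 : 0 < r := lt_of_le_of_lt (Complex.abs.nonneg z) hzr
      have hsub : closedBall (0:ℂ) r ⊆ 𝔹 := by
        intro x hx
        rw [mem_closedBall, dist_zero_right] at hx
        rw [mem_B_iff]
        calc Complex.abs x = ‖x‖ := (Complex.norm_eq_abs x).symm
          _ ≤ r := hx
          _ < 1 := hr1
      have hdc : DiffContOnCl ℂ Q (ball 0 r) := by
        apply DifferentiableOn.diffContOnCl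
        rw [closure_ball (0:ℂ) hr0.ne']
        exact hQd.mono hsub
      have hfr : ∀ x ∈ frontier (ball (0:ℂ) r), ‖Q x‖ ≤ 1/r := by
        intro x hx
        rw [frontier_ball (0:ℂ) hr0.ne'] at hx
        have hxr : Complex.abs x = r := by
          rw [mem_sphere, Complex.dist_eq, sub_zero] at hx; exact hx
        have hxne : x ≠ 0 := by
          intro h0; rw [h0] at hxr; simp at hxr; linarith
        have hxB : x ∈ 𝔹 := hsub (by rw [mem_closedBall, dist_zero_right,
          Complex.norm_eq_abs, hxr])
        rw [hQval x hxne, norm_mul, norm_inv, Complex.norm_eq_abs, hxr]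
        have : ‖h x‖ ≤ 1 := by
          rw [Complex.norm_eq_abs]; exact (hhB x hxB).le
        rw [div_eq_inv_mul]
        exact mul_le_mul_of_nonneg_left this (by positivity)
      exact Complex.norm_le_of_forall_mem_frontier_norm_le isBounded_ball hdc hfr
        (subset_closure (by rw [mem_ball, dist_zero_right, Complex.norm_eq_abs]; exact hzr))
    by_contra hcon
    push_neg at hcon
    have hQpos : 0 < ‖Q z‖ := lt_trans one_pos hcon
    have h1Q : 1/‖Q z‖ < 1 := by
      rw [div_lt_one hQpos]; exact hcon
    obtain ⟨r, hr1, hr2⟩ := exists_between (max_lt (mem_B_iff.1 hz) h1Q)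
    have hrz : Complex.abs z < r := lt_of_le_of_lt (le_max_left _ _) hr1
    have hr0 : 0 < r := lt_of_le_of_lt (Complex.abs.nonneg z) hrz
    have e1 : ‖Q z‖ * r ≤ 1 := (le_div_iff₀ hr0).1 (claim r hrz hr2)
    have e2 : 1 < r * ‖Q z‖ := (div_lt_iff₀ hQpos).1
      (lt_of_le_of_lt (le_max_right _ _) hr1)
    nlinarith
  have hQc₀ : Q c₀ = 1 := by
    rw [hQval c₀ hc₀ne, hhc₀, inv_mul_cancel₀ hc₀ne]
  have hev_diff : ∀ᶠ y in nhds c₀, DifferentiableAt ℂ Q y := by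
    filter_upwards [isOpen_ball.mem_nhds hc₀B] with y hy
    exact hQd.differentiableAt (isOpen_ball.mem_nhds hy)
  have hmax : IsLocalMax (norm ∘ Q) c₀ := by
    filter_upwards [isOpen_ball.mem_nhds hc₀B] with y hy
    show ‖Q y‖ ≤ ‖Q c₀‖
    rw [hQc₀, norm_one]
    exact hQ1 y hy
  have hloc := Complex.eventually_eq_of_isLocalMax_norm hev_diff hmax
  have hev0 : ∀ᶠ y in nhds c₀, Q y - 1 = 0 := by
    filter_upwards [hloc] with y hy
    rw [hy, hQc₀]; ring
  have hQone : ∀ z ∈ 𝔹, Q z - 1 = 0 := fun z hz =>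
    ((hQd.sub (differentiableOn_const 1)).analyticOnNhd
      isOpen_ball).eqOn_zero_of_preconnected_of_eventuallyEq_zero
      (convex_ball (0:ℂ) 1).isPreconnected hc₀B hev0 hz
  have hid : ∀ z ∈ 𝔹, h z = z := by
    intro z hz
    have h1 := sub_smul_dslope h 0 z
    rw [smul_eq_mul, sub_zero, hh0, sub_zero] at h1
    have h2 : Q z = 1 := by linear_combination hQone z hz
    rw [← h1, ← hQ, h2, mul_one]
  intro z hz
  have hτz := htauB z hz
  have e1 : h (tau a z) = tau a z := hid _ hτz
  have e2 : h (tau a z) = tau a (Φ z) := by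
    rw [hh]; dsimp only
    rw [tau_invol haa (mem_B_iff.1 hz)]
  have e3 : tau a (Φ z) = tau a z := by rw [← e2, e1]
  have e4 := congrArg (tau a) e3
  rwa [tau_invol haa (hΦlt z hz), tau_invol haa (mem_B_iff.1 hz)] at e4

end Schwarz

section ZeroOrder

variable {ψ : 𝔻 → ℂ}

lemma zero_order_ball {w : 𝔻} {m : ℕ} (h : ZeroOrderAt ψ w m) :
    ∃ G : ℂ → ℂ, DifferentiableOn ℂ G 𝔹 ∧ G ↑w ≠ 0 ∧
      ∀ z ∈ 𝔹, E ψ z = (z - (w:ℂ)) ^ m * G z := by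
  obtain ⟨g, hgH, hgw, hfact⟩ := h
  refine ⟨E g, holOn_iff.1 hgH, by rwa [E_coe], fun z hz => ?_⟩
  rw [E_apply_mem ψ hz, E_apply_mem g hz, hfact]
  rfl

lemma zero_order_lt_absurd {d : 𝔻} {m n : ℕ}
    (h₁ : ZeroOrderAt ψ d m) (h₂ : ZeroOrderAt ψ d n) (hmn : m < n) : False := by
  obtain ⟨G₁, hG₁d, hG₁w, hf₁⟩ := zero_order_ball h₁
  obtain ⟨G₂, hG₂d, hG₂w, hf₂⟩ := zero_order_ball h₂
  set F : ℂ → ℂ := fun z => (z - (d:ℂ)) ^ m with hF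
  set A : ℂ → ℂ := fun z => G₁ z - (z - (d:ℂ)) ^ (n - m) * G₂ z with hA
  have hFd : DifferentiableOn ℂ F 𝔹 := (differentiableOn_id.sub_const _).pow m
  have hAd : DifferentiableOn ℂ A 𝔹 :=
    hG₁d.sub (((differentiableOn_id.sub_const _).pow _).mul hG₂d)
  have hprod : ∀ z ∈ 𝔹, F z * A z = 0 := by
    intro z hz
    have e1 := hf₁ z hz
    have e2 := hf₂ z hz
    have e3 : (z - (d:ℂ)) ^ m * (z - (d:ℂ)) ^ (n - m) = (z - (d:ℂ)) ^ n := by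
      rw [← pow_add]
      congr 1
      omega
    rw [hF, hA]
    dsimp only
    rw [mul_sub, ← mul_assoc, e3, ← e1, ← e2]
    ring
  have hFne : ∃ z ∈ 𝔹, F z ≠ 0 := by
    by_cases hd : (d:ℂ) = 0
    · refine ⟨(1:ℂ)/2, by rw [mem_B_iff, ← Complex.norm_eq_abs]; norm_num, ?_⟩
      rw [hF]; dsimp only; rw [hd, sub_zero]
      norm_num
    · refine ⟨0, by rw [mem_B_iff]; norm_num, ?_⟩
      rw [hF]; dsimp only
      rw [zero_sub]
      exact pow_ne_zero m (neg_ne_zero.2 hd)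
  have hA0 : ∀ z ∈ 𝔹, A z = 0 := zero_div hFd hAd hprod hFne
  have := hA0 ↑d (coe_mem_B d)
  rw [hA] at this
  dsimp only at this
  rw [sub_self, zero_pow (by omega : n - m ≠ 0), zero_mul, sub_zero] at this
  exact hG₁w this

lemma zero_order_unique {d : 𝔻} {m n : ℕ}
    (h₁ : ZeroOrderAt ψ d m) (h₂ : ZeroOrderAt ψ d n) : m = n := by
  rcases lt_trichotomy m n with h | h | h
  · exact absurd h (by intro hh; exact zero_order_lt_absurd h₁ h₂ hh)
  · exact h
  · exact absurd h (by intro hh; exact zero_order_lt_absurd h₂ h₁ hh)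

lemma zero_order_psi_zero {d : 𝔻} {m : ℕ} (h : ZeroOrderAt ψ d m) (hm : 1 ≤ m) :
    ψ d = 0 := by
  obtain ⟨g, _, _, hfact⟩ := h
  rw [hfact d, sub_self, zero_pow (by omega : m ≠ 0), zero_mul]

/-- transfer of zero order along the automorphism Φ -/
lemma zero_order_transfer {Φ Φ' H₁ : ℂ → ℂ}
    (hΦd : DifferentiableOn ℂ Φ 𝔹) (hΦ'd : DifferentiableOn ℂ Φ' 𝔹)
    (hΦlt : ∀ z ∈ 𝔹, Complex.abs (Φ z) < 1) (hΦ'lt : ∀ z ∈ 𝔹, Complex.abs (Φ' z) < 1)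
    (hH₁d : DifferentiableOn ℂ H₁ 𝔹) (hH₁ne : ∀ z ∈ 𝔹, H₁ z ≠ 0)
    (hc1 : ∀ z ∈ 𝔹, E ψ (Φ z) = E ψ z * H₁ z)
    (hc6 : ∀ z ∈ 𝔹, Φ (Φ' z) = z) (hc7 : ∀ z ∈ 𝔹, Φ' (Φ z) = z)
    {a : 𝔻} {m : ℕ} (hza : ZeroOrderAt ψ a m) :
    ZeroOrderAt ψ (UnitDisc.mk (Φ ↑a) (hΦlt ↑a (coe_mem_B a))) m := by
  obtain ⟨G, hGd, hGw, hfact⟩ := zero_order_ball hza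
  set c : ℂ := Φ ↑a with hc
  have hcB : c ∈ 𝔹 := mem_B_iff.2 (hΦlt ↑a (coe_mem_B a))
  have hΦ'c : Φ' c = ↑a := by rw [hc]; exact hc7 ↑a (coe_mem_B a)
  have hΦ'B : ∀ z ∈ 𝔹, Φ' z ∈ 𝔹 := fun z hz => mem_B_iff.2 (hΦ'lt z hz)
  have hΦB : ∀ z ∈ 𝔹, Φ z ∈ 𝔹 := fun z hz => mem_B_iff.2 (hΦlt z hz)
  -- derivative of Φ' at c is nonzero
  have hder : deriv Φ' c ≠ 0 := by
    have hev : (fun z => Φ (Φ' z)) =ᶠ[nhds c] id := by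
      filter_upwards [isOpen_ball.eventually_mem hcB] with y hy
      exact hc6 y hy
    have hd1 : deriv (fun z => Φ (Φ' z)) c = 1 := by
      rw [Filter.EventuallyEq.deriv_eq hev, deriv_id]
    have hdΦ' : DifferentiableAt ℂ Φ' c := hΦ'd.differentiableAt (isOpen_ball.mem_nhds hcB)
    have hdΦ : DifferentiableAt ℂ Φ (Φ' c) :=
      hΦd.differentiableAt (isOpen_ball.mem_nhds (hΦ'B c hcB))
    have hcomp : deriv (fun z => Φ (Φ' z)) c = deriv Φ (Φ' c) * deriv Φ' c :=
      deriv_comp c hdΦ hdΦ'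
    rw [hd1] at hcomp
    intro h0
    rw [h0, mul_zero] at hcomp
    exact one_ne_zero hcomp
  set Q := dslope Φ' c with hQ
  have hQd : DifferentiableOn ℂ Q 𝔹 :=
    (Complex.differentiableOn_dslope (isOpen_ball.mem_nhds hcB)).2 hΦ'd
  have hQc : Q c ≠ 0 := by rw [hQ, dslope_same]; exact hder
  have hQfact : ∀ w ∈ 𝔹, Φ' w - ↑a = (w - c) * Q w := by
    intro w hw
    have h1 := sub_smul_dslope Φ' c w
    rw [smul_eq_mul] at h1
    rw [← hΦ'c, ← h1]
  -- the factorisation of ψ at c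
  set H : ℂ → ℂ := fun w => Q w ^ m * G (Φ' w) * H₁ (Φ' w) with hH
  have hHd : DifferentiableOn ℂ H 𝔹 :=
    ((hQd.pow m).mul (hGd.comp hΦ'd hΦ'B)).mul (hH₁d.comp hΦ'd hΦ'B)
  have hHc : H c ≠ 0 := by
    rw [hH]; dsimp only
    rw [hΦ'c]
    exact mul_ne_zero (mul_ne_zero (pow_ne_zero m hQc) hGw) (hH₁ne ↑a (coe_mem_B a))
  have hfactC : ∀ w ∈ 𝔹, E ψ w = (w - c) ^ m * H w := by
    intro w hw
    have e1 : E ψ w = E ψ (Φ' w) * H₁ (Φ' w) := by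
      have := hc1 (Φ' w) (hΦ'B w hw)
      rw [hc6 w hw] at this
      exact this
    have e2 : E ψ (Φ' w) = (Φ' w - ↑a) ^ m * G (Φ' w) := hfact (Φ' w) (hΦ'B w hw)
    rw [e1, e2, hQfact w hw, mul_pow, hH]
    ring
  refine ⟨fun z : 𝔻 => H ↑z, ⟨H, hHd, fun _ => rfl⟩, hHc, ?_⟩
  · intro z
    have := hfactC ↑z (coe_mem_B z)
    rw [E_coe] at this
    rw [this]
    rfl

end ZeroOrder

section Core

variable {ψ : 𝔻 → ℂ} {T T' : (𝔻 → ℂ) → (𝔻 → ℂ)}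

lemma E_one {z : ℂ} (hz : z ∈ 𝔹) : E (fun _ : 𝔻 => (1:ℂ)) z = 1 := by
  rw [E_apply_mem _ hz]

lemma E_id {z : ℂ} (hz : z ∈ 𝔹) : E (fun w : 𝔻 => (w:ℂ)) z = z := by
  rw [E_apply_mem _ hz]; rfl

lemma E_P {g : 𝔻 → ℂ} {z : ℂ} (hz : z ∈ 𝔹) : E (P ψ g) z = E ψ z * E g z := by
  rw [E_apply_mem _ hz, E_apply_mem _ hz, E_apply_mem _ hz]; rfl

/-- from `T'∘T = id` on `ψH^∞` and the representation formulas, `Φ ∘ Φ' = id`. -/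
lemma comp_eq_id (hψ : MemHinf ψ) (hne : ∃ z, ψ z ≠ 0)
    (hT : IsAlgAutOn (psiH ψ) T) (hT' : IsAlgAutOn (psiH ψ) T')
    (hT'T : ∀ f ∈ psiH ψ, T' (T f) = f)
    {Φ Φ' : ℂ → ℂ}
    (hΦd : DifferentiableOn ℂ Φ 𝔹) (hΦlt : ∀ z ∈ 𝔹, Complex.abs (Φ z) < 1)
    (hR1 : ∀ z ∈ 𝔹, E ψ (Φ z) = E (T (P ψ (fun _ => 1))) z)
    (hrep : ∀ g : 𝔻 → ℂ, MemHinf g → ∀ z ∈ 𝔹,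
      E (T (P ψ g)) z = E (T (P ψ (fun _ => 1))) z * E g (Φ z))
    (hΦ'd : DifferentiableOn ℂ Φ' 𝔹) (hΦ'lt : ∀ z ∈ 𝔹, Complex.abs (Φ' z) < 1)
    (hR1' : ∀ z ∈ 𝔹, E ψ (Φ' z) = E (T' (P ψ (fun _ => 1))) z)
    (hrep' : ∀ g : 𝔻 → ℂ, MemHinf g → ∀ z ∈ 𝔹,
      E (T' (P ψ g)) z = E (T' (P ψ (fun _ => 1))) z * E g (Φ' z)) :
    ∀ z ∈ 𝔹, Φ (Φ' z) = z := by
  have hΨd : DifferentiableOn ℂ (E ψ) 𝔹 := holOn_iff.1 hψ.1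
  have hΨne : ∃ z ∈ 𝔹, E ψ z ≠ 0 := by
    obtain ⟨z, hz⟩ := hne
    exact ⟨↑z, coe_mem_B z, by rwa [E_coe]⟩
  have hD'ne : ∃ z ∈ 𝔹, E (T' (P ψ (fun _ => 1))) z ≠ 0 := TP1_ne hψ hne hT'
  have hDd : DifferentiableOn ℂ (E (T (P ψ (fun _ => 1)))) 𝔹 :=
    holOn_iff.1 (psiH_subset_Hinf hψ (hT.1 _ (P_mem memHinf_one))).1
  have hD'd : DifferentiableOn ℂ (E (T' (P ψ (fun _ => 1)))) 𝔹 :=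
    holOn_iff.1 (psiH_subset_Hinf hψ (hT'.1 _ (P_mem memHinf_one))).1
  have hΦB : ∀ z ∈ 𝔹, Φ z ∈ 𝔹 := fun z hz => mem_B_iff.2 (hΦlt z hz)
  have hΦ'B : ∀ z ∈ 𝔹, Φ' z ∈ 𝔹 := fun z hz => mem_B_iff.2 (hΦ'lt z hz)
  -- membership decompositions
  obtain ⟨h₁, h₁H, hTP1⟩ := hT.1 _ (P_mem (memHinf_one))
  obtain ⟨h₂, h₂H, hTP2⟩ := hT.1 _ (P_mem (memHinf_id))
  have hDH : ∀ z ∈ 𝔹, E (T (P ψ (fun _ => 1))) z = E ψ z * E h₁ z := by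
    intro z hz
    rw [hTP1]
    exact E_P hz
  -- c3
  have hc3 : ∀ g : 𝔻 → ℂ, MemHinf g → ∀ g' : 𝔻 → ℂ, MemHinf g' →
      T (P ψ g) = (fun z => ψ z * g' z) → ∀ z ∈ 𝔹,
      E ψ z * E g z = E (T' (P ψ (fun _ => 1))) z * E g' (Φ' z) := by
    intro g hg g' hg' hTPg z hz
    have h1 : T' (P ψ g') = P ψ g := by
      have : P ψ g' = T (P ψ g) := hTPg.symm
      rw [this]
      exact hT'T _ (P_mem hg)
    have h2 := hrep' g' hg' z hz
    rw [h1, E_P hz] at h2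
    exact h2
  -- c4 and c5
  have hc4 : ∀ z ∈ 𝔹, E ψ z = E (T' (P ψ (fun _ => 1))) z * E h₁ (Φ' z) := by
    intro z hz
    have := hc3 (fun _ => 1) memHinf_one h₁ h₁H hTP1 z hz
    rwa [E_one hz, mul_one] at this
  have hc5 : ∀ z ∈ 𝔹, E ψ z * z = E (T' (P ψ (fun _ => 1))) z * E h₂ (Φ' z) := by
    intro z hz
    have := hc3 (fun w : 𝔻 => (w:ℂ)) memHinf_id h₂ h₂H hTP2 z hz
    rwa [E_id hz] at this
  have hc5a : ∀ z ∈ 𝔹, E ψ z * E h₂ z = E (T (P ψ (fun _ => 1))) z * Φ z := by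
    intro z hz
    have h1 := hrep (fun w : 𝔻 => (w:ℂ)) memHinf_id z hz
    rw [hTP2] at h1
    have h2 : E (fun z => ψ z * h₂ z) z = E ψ z * E h₂ z := E_P hz
    rw [h2] at h1
    rw [h1, E_id (hΦB z hz)]
  -- pointwise product identity
  have hprod : ∀ z ∈ 𝔹, E ψ z * (E (T' (P ψ (fun _ => 1))) z * (z - Φ (Φ' z))) = 0 := by
    intro z hz
    set w := Φ' z with hw
    have hwB : w ∈ 𝔹 := hΦ'B z hz
    by_cases hX : E ψ z = 0
    · rw [hX, zero_mul]
    by_cases hY : E (T' (P ψ (fun _ => 1))) z = 0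
    · rw [hY, zero_mul, mul_zero]
    have hE : E ψ w = E (T' (P ψ (fun _ => 1))) z := hR1' z hz
    have i := hc5 z hz
    have ii := hc5a w hwB
    have iv := hc4 z hz
    have vi := hDH w hwB
    have k2 : E (T' (P ψ (fun _ => 1))) z * E h₂ w
        = E (T (P ψ (fun _ => 1))) w * Φ w := by
      rw [← hE]; exact ii
    have k3 : E (T (P ψ (fun _ => 1))) w = E ψ z := by
      rw [vi, hE, iv]
    have k4 : E ψ z * z = E ψ z * Φ w := by
      rw [i, k2, k3]
    have k5 : z = Φ w := mul_left_cancel₀ hX k4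
    rw [← k5, sub_self, mul_zero, mul_zero]
  have hAd : DifferentiableOn ℂ
      (fun z => E (T' (P ψ (fun _ => 1))) z * (z - Φ (Φ' z))) 𝔹 :=
    hD'd.mul (differentiableOn_id.sub (hΦd.comp hΦ'd hΦ'B))
  have hA := zero_div hΨd hAd hprod hΨne
  have hBd : DifferentiableOn ℂ (fun z => z - Φ (Φ' z)) 𝔹 :=
    differentiableOn_id.sub (hΦd.comp hΦ'd hΦ'B)
  have hB := zero_div hD'd hBd hA hD'ne
  intro z hz
  have h0 := hB z hz
  linear_combination -h0

end Core

section Final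

variable {ψ : 𝔻 → ℂ} {T : (𝔻 → ℂ) → (𝔻 → ℂ)}

theorem aut_id (hψ : MemHinf ψ) (hne : ∃ z, ψ z ≠ 0)
    (a b : 𝔻) (m₁ m₂ : ℕ) (hm₁ : 1 ≤ m₁) (hm₂ : 1 ≤ m₂) (hmne : m₁ ≠ m₂)
    (hza : ZeroOrderAt ψ a m₁) (hzb : ZeroOrderAt ψ b m₂)
    (hother : ∀ d : 𝔻, ψ d = 0 → d ≠ a → d ≠ b →
      ¬ ZeroOrderAt ψ d m₁ ∧ ¬ ZeroOrderAt ψ d m₂)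
    (hT : IsAlgAutOn (psiH ψ) T) :
    ∀ f ∈ psiH ψ, T f = f := by
  classical
  obtain ⟨T', hT'aut, hT'T, hTT'⟩ := inverse_aut hψ hT
  obtain ⟨Φ, hΦd, hΦlt, hR1, hrep⟩ := main_rep hψ hne hT
  obtain ⟨Φ', hΦ'd, hΦ'lt, hR1', hrep'⟩ := main_rep hψ hne hT'aut
  have hΨd : DifferentiableOn ℂ (E ψ) 𝔹 := holOn_iff.1 hψ.1
  have hΨne : ∃ z ∈ 𝔹, E ψ z ≠ 0 := by
    obtain ⟨z, hz⟩ := hne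
    exact ⟨↑z, coe_mem_B z, by rwa [E_coe]⟩
  have hΦB : ∀ z ∈ 𝔹, Φ z ∈ 𝔹 := fun z hz => mem_B_iff.2 (hΦlt z hz)
  have hΦ'B : ∀ z ∈ 𝔹, Φ' z ∈ 𝔹 := fun z hz => mem_B_iff.2 (hΦ'lt z hz)
  have hc6 := comp_eq_id hψ hne hT hT'aut hT'T hΦd hΦlt hR1 hrep hΦ'd hΦ'lt hR1' hrep'
  have hc7 := comp_eq_id hψ hne hT'aut hT hTT' hΦ'd hΦ'lt hR1' hrep' hΦd hΦlt hR1 hrep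
  -- H₁ := multiplier of T, H₁' of T'
  obtain ⟨h₁, h₁H, hTP1⟩ := hT.1 _ (P_mem (memHinf_one))
  obtain ⟨h₁', h₁'H, hT'P1⟩ := hT'aut.1 _ (P_mem (memHinf_one))
  have hH₁d : DifferentiableOn ℂ (E h₁) 𝔹 := holOn_iff.1 h₁H.1
  have hH₁'d : DifferentiableOn ℂ (E h₁') 𝔹 := holOn_iff.1 h₁'H.1
  have hDH : ∀ z ∈ 𝔹, E (T (P ψ (fun _ => 1))) z = E ψ z * E h₁ z := by
    intro z hz; rw [hTP1]; exact E_P hz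
  have hD'H : ∀ z ∈ 𝔹, E (T' (P ψ (fun _ => 1))) z = E ψ z * E h₁' z := by
    intro z hz; rw [hT'P1]; exact E_P hz
  -- c4
  have hc4 : ∀ z ∈ 𝔹, E ψ z = E (T' (P ψ (fun _ => 1))) z * E h₁ (Φ' z) := by
    intro z hz
    have h1 : T' (P ψ h₁) = P ψ (fun _ => 1) := by
      have e : P ψ h₁ = T (P ψ (fun _ => 1)) := hTP1.symm
      rw [e]
      exact hT'T _ (P_mem memHinf_one)
    have h2 := hrep' h₁ h₁H z hz
    rw [h1, E_P hz, E_one hz, mul_one] at h2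
    exact h2
  -- H₁ never vanishes
  have hH₁ne : ∀ w ∈ 𝔹, E h₁ w ≠ 0 := by
    have hrel : ∀ z ∈ 𝔹, 1 - E h₁' z * E h₁ (Φ' z) = 0 := by
      have hprod : ∀ z ∈ 𝔹, E ψ z * (1 - E h₁' z * E h₁ (Φ' z)) = 0 := by
        intro z hz
        have e1 := hc4 z hz
        have e2 := hD'H z hz
        rw [e2] at e1
        linear_combination e1
      have hd : DifferentiableOn ℂ (fun z => 1 - E h₁' z * E h₁ (Φ' z)) 𝔹 :=
        (differentiableOn_const 1).sub (hH₁'d.mul (hH₁d.comp hΦ'd hΦ'B))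
      exact zero_div hΨd hd hprod hΨne
    intro w hw
    have h2 := hrel (Φ w) (hΦB w hw)
    rw [hc7 w hw] at h2
    intro h0
    rw [h0, mul_zero, sub_zero] at h2
    exact one_ne_zero h2
  -- ψ∘Φ = ψ·H₁
  have hc1 : ∀ z ∈ 𝔹, E ψ (Φ z) = E ψ z * E h₁ z := by
    intro z hz
    rw [hR1 z hz]
    exact hDH z hz
  -- a ≠ b
  have hab : a ≠ b := by
    intro h
    subst h
    exact hmne (zero_order_unique hza hzb)
  -- Φ fixes a
  have hza' := zero_order_transfer hΦd hΦ'd hΦlt hΦ'lt hH₁d hH₁ne hc1 hc6 hc7 hza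
  have hzb' := zero_order_transfer hΦd hΦ'd hΦlt hΦ'lt hH₁d hH₁ne hc1 hc6 hc7 hzb
  have hΦa : Φ ↑a = ↑a := by
    set d : 𝔻 := UnitDisc.mk (Φ ↑a) (hΦlt ↑a (coe_mem_B a)) with hd
    rcases eq_or_ne d a with h | h
    · have := congrArg (fun x : 𝔻 => (x : ℂ)) h
      exact this
    rcases eq_or_ne d b with h2 | h2
    · rw [h2] at hza'
      exact absurd (zero_order_unique hza' hzb) hmne
    · have hψd : ψ d = 0 := zero_order_psi_zero hza' hm₁
      exact absurd hza' ((hother d hψd h h2).1)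
  have hΦb : Φ ↑b = ↑b := by
    set d : 𝔻 := UnitDisc.mk (Φ ↑b) (hΦlt ↑b (coe_mem_B b)) with hd
    rcases eq_or_ne d b with h | h
    · have := congrArg (fun x : 𝔻 => (x : ℂ)) h
      exact this
    rcases eq_or_ne d a with h2 | h2
    · rw [h2] at hzb'
      exact absurd (zero_order_unique hza hzb') hmne
    · have hψd : ψ d = 0 := zero_order_psi_zero hzb' hm₂
      exact absurd hzb' ((hother d hψd h2 h).2)
  -- Schwarz: Φ = id
  have hid : ∀ z ∈ 𝔹, Φ z = z :=
    schwarz_two_fixed hΦd hΦlt (coe_mem_B a) (coe_mem_B b)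
      (fun h => hab (UnitDisc.coe_injective h)) hΦa hΦb
  -- conclude
  have hDψ : ∀ z ∈ 𝔹, E (T (P ψ (fun _ => 1))) z = E ψ z := by
    intro z hz
    rw [← hR1 z hz, hid z hz]
  intro f hf
  obtain ⟨g, hg, rfl⟩ := hf
  apply funeq_of_E_eqOn
  intro z hz
  have h1 : (fun z => ψ z * g z) = P ψ g := rfl
  rw [h1, hrep g hg z hz, hDψ z hz, hid z hz, E_P hz]

end Final

end Aux

/-- if `ψ ∈ H^∞` (not identically zero) has zeros `a ≠ b` of distinct
multiplicities `m₁ ≠ m₂`, and no other zero of `ψ` has multiplicity `m₁` or `m₂`, then the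
only algebra automorphism of `ψ H^∞` is the identity. -/
theorem stmt_16 (ψ : 𝔻 → ℂ) (hψ : MemHinf ψ) (hne : ∃ z, ψ z ≠ 0)
    (a b : 𝔻) (m₁ m₂ : ℕ) (hm₁ : 1 ≤ m₁) (hm₂ : 1 ≤ m₂) (hmne : m₁ ≠ m₂)
    (hza : ZeroOrderAt ψ a m₁) (hzb : ZeroOrderAt ψ b m₂)
    (hother : ∀ d : 𝔻, ψ d = 0 → d ≠ a → d ≠ b →
      ¬ ZeroOrderAt ψ d m₁ ∧ ¬ ZeroOrderAt ψ d m₂)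
    (T : (𝔻 → ℂ) → (𝔻 → ℂ)) (hT : IsAlgAutOn (psiH ψ) T) :
    ∀ f ∈ psiH ψ, T f = f := by
  intro f hf
  exact Aux.aut_id hψ hne a b m₁ m₂ hm₁ hm₂ hmne hza hzb hother hT f hf
end

section
/- Let a, b ∈ 𝔻 be distinct, let m ≥ 1, and let ψ = (τ_a·τ_b)^m. For φ ∈ Aut(𝔻), the composition operator C_φ (f ↦ f ∘ φ) is a well-defined algebra automorphism of ψH^∞ if and only if either φ is the identity map of 𝔻 or φ = τ_a ∘ τ_c ∘ τ_a where c = τ_a(b). -/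
open Complex Metric Set

local notation "𝔻" => Complex.UnitDisc

/-! ### Auxiliary lemmas -/

local notation "conj'" => starRingEnd ℂ

lemma one_sub_ne {x : ℂ} (h : ‖x‖ < 1) : 1 - x ≠ 0 := by
  intro h0
  have : x = 1 := by linear_combination -h0
  simp [this] at h

lemma denom_ne {u z : ℂ} (hu : ‖u‖ < 1) (hz : ‖z‖ < 1) :
    1 - conj' u * z ≠ 0 := by
  apply one_sub_ne
  rw [norm_mul, Complex.norm_conj]
  calc ‖u‖ * ‖z‖ ≤ ‖u‖ * 1 :=
        mul_le_mul_of_nonneg_left hz.le (norm_nonneg u)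
    _ < 1 := by rwa [mul_one]

lemma self_conj_ne {u : ℂ} (hu : ‖u‖ < 1) : 1 - u * conj' u ≠ 0 := by
  apply one_sub_ne
  rw [norm_mul, Complex.norm_conj]
  nlinarith [norm_nonneg u]

lemma normSq_diff {u z : ℂ} :
    Complex.normSq (1 - conj' u * z) - Complex.normSq (u - z)
      = (1 - Complex.normSq u) * (1 - Complex.normSq z) := by
  have h : ((1 - conj' u * z) * conj' (1 - conj' u * z) - (u - z) * conj' (u - z) : ℂ)
      = (1 - u * conj' u) * (1 - z * conj' z) := by
    simp only [map_sub, map_mul, map_one, Complex.conj_conj]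
    ring
  rw [Complex.mul_conj, Complex.mul_conj, Complex.mul_conj, Complex.mul_conj] at h
  exact_mod_cast h

lemma mobius_lt_one {u z : ℂ} (hu : ‖u‖ < 1) (hz : ‖z‖ < 1) :
    ‖mobius u z‖ < 1 := by
  have hd := denom_ne hu hz
  have hdpos : 0 < ‖1 - conj' u * z‖ := by
    simpa [norm_pos_iff] using hd
  rw [mobius, norm_div, div_lt_one hdpos]
  have hsq : Complex.normSq (u - z) < Complex.normSq (1 - conj' u * z) := by
    have h1 : Complex.normSq u < 1 := by
      rw [← Complex.sq_norm]; nlinarith [norm_nonneg u]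
    have h2 : Complex.normSq z < 1 := by
      rw [← Complex.sq_norm]; nlinarith [norm_nonneg z]
    nlinarith [normSq_diff (u := u) (z := z)]
  rw [← Complex.sq_norm, ← Complex.sq_norm] at hsq
  nlinarith [norm_nonneg (u - z), norm_nonneg (1 - conj' u * z)]

lemma mobius_invol {u z : ℂ} (hu : ‖u‖ < 1) (hz : ‖z‖ < 1) :
    mobius u (mobius u z) = z := by
  have hd3 : 1 - conj' u * z ≠ 0 := denom_ne hu hz
  have h1u : 1 - u * conj' u ≠ 0 := self_conj_ne hu
  have h1 : u - mobius u z = ((1 - u * conj' u) * z) / (1 - conj' u * z) := by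
    rw [mobius, eq_div_iff hd3, sub_mul, div_mul_cancel₀ _ hd3]; ring
  have h2 : 1 - conj' u * mobius u z = (1 - u * conj' u) / (1 - conj' u * z) := by
    rw [mobius, eq_div_iff hd3, sub_mul, mul_assoc, div_mul_cancel₀ _ hd3]; ring
  show (u - mobius u z) / (1 - conj' u * mobius u z) = z
  rw [h1, h2]
  field_simp

lemma mobius_zero (u : ℂ) : mobius u 0 = u := by simp [mobius]

lemma mobius_self (u : ℂ) : mobius u u = 0 := by simp [mobius]

lemma mobius_eq_zero {u z : ℂ} (hu : ‖u‖ < 1) (hz : ‖z‖ < 1)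
    (h : mobius u z = 0) : z = u := by
  rw [mobius, div_eq_zero_iff] at h
  rcases h with h | h
  · linear_combination -h
  · exact absurd h (denom_ne hu hz)

lemma mobius_comp {u v z : ℂ} (hu : ‖u‖ < 1) (hv : ‖v‖ < 1)
    (hz : ‖z‖ < 1) :
    mobius (mobius u v) (mobius u z)
      = (u * conj' v - 1) / (1 - conj' u * v) * mobius v z := by
  have d1 : 1 - conj' u * v ≠ 0 := denom_ne hu hv
  have d2 : 1 - u * conj' v ≠ 0 := by
    have := denom_ne hv hu
    intro h; apply this; linear_combination h
  have d3 : 1 - conj' u * z ≠ 0 := denom_ne hu hz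
  have d4 : 1 - conj' v * z ≠ 0 := denom_ne hv hz
  have h1u : 1 - u * conj' u ≠ 0 := self_conj_ne hu
  have hconjC : conj' (mobius u v) = (conj' u - conj' v) / (1 - u * conj' v) := by
    simp [mobius, map_div₀, map_sub, map_mul]
  have h1 : mobius u v - mobius u z
      = ((1 - u * conj' u) * (z - v)) / ((1 - conj' u * v) * (1 - conj' u * z)) := by
    rw [mobius, mobius, div_sub_div _ _ d1 d3]; congr 1; ring
  have h2 : 1 - conj' (mobius u v) * mobius u z
      = ((1 - u * conj' u) * (1 - conj' v * z)) / ((1 - u * conj' v) * (1 - conj' u * z)) := by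
    rw [hconjC, mobius, div_mul_div_comm, one_sub_div (mul_ne_zero d2 d3)]; congr 1; ring
  show (mobius u v - mobius u z) / (1 - conj' (mobius u v) * mobius u z) = _
  rw [h1, h2, mobius]
  rw [div_div_div_eq]
  field_simp
  ring

lemma mem_ball_iff_abs {z : ℂ} : z ∈ ball (0 : ℂ) 1 ↔ ‖z‖ < 1 := by
  rw [mem_ball_zero_iff]

lemma mobius_diffAt {u z : ℂ} (hu : ‖u‖ < 1) (hz : ‖z‖ < 1) :
    DifferentiableAt ℂ (mobius u) z := by
  have : DifferentiableAt ℂ (fun w => (u - w) / (1 - conj' u * w)) z := by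
    apply DifferentiableAt.div
    · exact (differentiable_const u).differentiableAt.sub differentiable_id.differentiableAt
    · exact (differentiable_const 1).differentiableAt.sub
        ((differentiable_const (conj' u)).differentiableAt.mul differentiable_id.differentiableAt)
    · exact denom_ne hu hz
  exact this

/-- Schwarz equality: self-map of the disc fixing 0 and another point is the identity. -/
lemma schwarz_id {f : ℂ → ℂ} (hd : DifferentiableOn ℂ f (ball 0 1))
    (hm : MapsTo f (ball 0 1) (ball 0 1)) (h0 : f 0 = 0) {c : ℂ}
    (hc : c ∈ ball (0:ℂ) 1) (hc0 : c ≠ 0) (hfc : f c = c) :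
    EqOn f id (ball (0:ℂ) 1) := by
  have hmaps : MapsTo f (ball (0:ℂ) 1) (ball (f 0) 1) := by rwa [h0]
  have hds : dslope f 0 c = 1 := by
    rw [dslope_of_ne _ hc0, slope_def_field, hfc, h0]; simp [div_self hc0]
  have heq := Complex.affine_of_mapsTo_ball_of_exists_norm_dslope_eq_div hd (hmaps.mono_right ball_subset_closedBall) hc
    (by rw [hds]; norm_num)
  intro z hz
  simpa [h0, hds] using heq hz

/-- A holomorphic self-map of the disc fixing two distinct points is the identity. -/
lemma fix_two_id {F : ℂ → ℂ} (hF : DifferentiableOn ℂ F (ball 0 1))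
    (hmaps : MapsTo F (ball 0 1) (ball 0 1)) {p q : ℂ}
    (hp : ‖p‖ < 1) (hq : ‖q‖ < 1) (hpq : p ≠ q)
    (hFp : F p = p) (hFq : F q = q) :
    ∀ z, ‖z‖ < 1 → F z = z := by
  set g : ℂ → ℂ := fun w => mobius p (F (mobius p w)) with hg
  have habsmem : ∀ w : ℂ, ‖w‖ < 1 → ‖F w‖ < 1 := by
    intro w hw
    exact mem_ball_iff_abs.1 (hmaps (mem_ball_iff_abs.2 hw))
  have hgd : DifferentiableOn ℂ g (ball 0 1) := by
    intro w hw
    have hw' := mem_ball_iff_abs.1 hw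
    have h1 : ‖mobius p w‖ < 1 := mobius_lt_one hp hw'
    have h2 : ‖F (mobius p w)‖ < 1 := habsmem _ h1
    apply DifferentiableAt.differentiableWithinAt
    exact (mobius_diffAt hp h2).comp w
      (((hF.differentiableAt (isOpen_ball.mem_nhds (mem_ball_iff_abs.2 h1))).comp w
        (mobius_diffAt hp hw')))
  have hgm : MapsTo g (ball 0 1) (ball 0 1) := by
    intro w hw
    have hw' := mem_ball_iff_abs.1 hw
    exact mem_ball_iff_abs.2 (mobius_lt_one hp (habsmem _ (mobius_lt_one hp hw')))
  have hg0 : g 0 = 0 := by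
    rw [hg]; simp only [mobius_zero, hFp, mobius_self]
  set c : ℂ := mobius p q with hc
  have hcabs : ‖c‖ < 1 := mobius_lt_one hp hq
  have hc0 : c ≠ 0 := fun h => hpq.symm (mobius_eq_zero hp hq h)
  have hgc : g c = c := by
    rw [hg]; simp only [hc, mobius_invol hp hq, hFq]
  have hid := schwarz_id hgd hgm hg0 (mem_ball_iff_abs.2 hcabs) hc0 hgc
  intro z hz
  have h1 : ‖mobius p z‖ < 1 := mobius_lt_one hp hz
  have := hid (mem_ball_iff_abs.2 h1)
  simp only [hg, id] at this
  rw [mobius_invol hp hz] at this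
  have h2 := congrArg (mobius p) this
  rwa [mobius_invol hp (habsmem _ hz), mobius_invol hp hz] at h2

lemma swap_maps {A C : ℂ} (hA : ‖A‖ < 1) (hC : ‖C‖ < 1)
    {w : ℂ} (hw : ‖w‖ < 1) :
    ‖mobius A (mobius C (mobius A w))‖ < 1 :=
  mobius_lt_one hA (mobius_lt_one hC (mobius_lt_one hA hw))

lemma swap_invol {A C : ℂ} (hA : ‖A‖ < 1) (hC : ‖C‖ < 1)
    {w : ℂ} (hw : ‖w‖ < 1) :
    mobius A (mobius C (mobius A (mobius A (mobius C (mobius A w))))) = w := by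
  rw [mobius_invol hA (mobius_lt_one hC (mobius_lt_one hA hw)),
    mobius_invol hC (mobius_lt_one hA hw), mobius_invol hA hw]

lemma swap_diff {A C : ℂ} (hA : ‖A‖ < 1) (hC : ‖C‖ < 1) :
    DifferentiableOn ℂ (fun w => mobius A (mobius C (mobius A w))) (ball 0 1) := by
  intro w hw
  have hw' := mem_ball_iff_abs.1 hw
  apply DifferentiableAt.differentiableWithinAt
  exact (mobius_diffAt hA (mobius_lt_one hC (mobius_lt_one hA hw'))).comp w
    ((mobius_diffAt hC (mobius_lt_one hA hw')).comp w (mobius_diffAt hA hw'))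

lemma memHinf_const (c : ℂ) : MemHinf (fun _ => c) :=
  ⟨⟨fun _ => c, differentiableOn_const c, fun _ => rfl⟩, ‖c‖, fun _ => le_refl _⟩

lemma swap_a {A B z : ℂ} (hA : ‖A‖ < 1) (hB : ‖B‖ < 1)
    (hz : ‖z‖ < 1) :
    mobius A (mobius A (mobius (mobius A B) (mobius A z)))
      = (A * conj' B - 1) / (1 - conj' A * B) * mobius B z := by
  rw [mobius_invol hA (mobius_lt_one (mobius_lt_one hA hB) (mobius_lt_one hA hz))]
  exact mobius_comp hA hB hz

lemma swap_b {A B z : ℂ} (hA : ‖A‖ < 1) (hB : ‖B‖ < 1)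
    (hz : ‖z‖ < 1) :
    mobius B (mobius A (mobius (mobius A B) (mobius A z)))
      = (A * conj' (mobius A B) - 1) / (1 - conj' A * mobius A B) * mobius A z := by
  set C : ℂ := mobius A B with hCdef
  have hCabs : ‖C‖ < 1 := mobius_lt_one hA hB
  have hB' : B = mobius A C := by rw [hCdef, mobius_invol hA hB]
  rw [hB', mobius_comp hA hCabs (mobius_lt_one hCabs (mobius_lt_one hA hz)),
    mobius_invol hCabs (mobius_lt_one hA hz)]

/-- for distinct `a, b ∈ 𝔻`, `m ≥ 1`, `ψ = (τ_a τ_b)^m` and `φ ∈ Aut(𝔻)`,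
the composition operator `C_φ` is a well-defined algebra automorphism of `ψ H^∞` iff
`φ` is the identity or `φ = τ_a ∘ τ_c ∘ τ_a` with `c = τ_a(b)`. -/
theorem stmt_19 (a b : 𝔻) (hab : a ≠ b) (m : ℕ) (hm : 1 ≤ m)
    (φ : 𝔻 → 𝔻) (hφ : IsDiscAut φ) :
    CompAutOn (psiH (fun z : 𝔻 => (mobius ↑a ↑z * mobius ↑b ↑z) ^ m)) φ ↔
      (∀ z : 𝔻, φ z = z) ∨
      (∀ z : 𝔻, (↑(φ z) : ℂ) = mobius ↑a (mobius (mobius ↑a ↑b) (mobius ↑a ↑z))) := by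
  obtain ⟨⟨F, hFd, hFv⟩, hφinj, hφsurj⟩ := hφ
  have hA : ‖(↑a : ℂ)‖ < 1 := a.norm_lt_one
  have hB : ‖(↑b : ℂ)‖ < 1 := b.norm_lt_one
  have hAB : (↑a : ℂ) ≠ ↑b := fun h => hab (Complex.UnitDisc.coe_injective h)
  have hC : ‖mobius ↑a ↑b‖ < 1 := mobius_lt_one hA hB
  set ψ : 𝔻 → ℂ := fun z : 𝔻 => (mobius ↑a ↑z * mobius ↑b ↑z) ^ m with hψ
  have hm0 : m ≠ 0 := by omega
  constructor
  · intro h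
    have hψmem : ψ ∈ psiH ψ :=
      ⟨fun _ => 1, memHinf_const 1, funext fun z => (mul_one _).symm⟩
    obtain ⟨g, hg, hcomp⟩ := h.1 ψ hψmem
    have hψzero : ∀ w : 𝔻, ψ w = 0 → w = a ∨ w = b := by
      intro w hw
      have hw' : (mobius ↑a ↑w * mobius ↑b ↑w) ^ m = 0 := hw
      simp only [pow_eq_zero_iff hm0, mul_eq_zero] at hw'
      rcases hw' with hw' | hw'
      · exact Or.inl (Complex.UnitDisc.coe_injective (mobius_eq_zero hA w.norm_lt_one hw'))
      · exact Or.inr (Complex.UnitDisc.coe_injective (mobius_eq_zero hB w.norm_lt_one hw'))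
    have hψa : ψ a = 0 := by
      show (mobius ↑a ↑a * mobius ↑b ↑a) ^ m = 0
      rw [mobius_self, zero_mul, zero_pow hm0]
    have hψb : ψ b = 0 := by
      show (mobius ↑a ↑b * mobius ↑b ↑b) ^ m = 0
      rw [mobius_self, mul_zero, zero_pow hm0]
    have hφa : φ a = a ∨ φ a = b := by
      apply hψzero
      have h5 : ψ (φ a) = ψ a * g a := congrFun hcomp a
      rw [h5, hψa, zero_mul]
    have hφb : φ b = a ∨ φ b = b := by
      apply hψzero
      have h5 : ψ (φ b) = ψ b * g b := congrFun hcomp b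
      rw [h5, hψb, zero_mul]
    have hFmaps : MapsTo F (ball 0 1) (ball 0 1) := by
      intro w hw
      have h6 := hFv (Complex.UnitDisc.mk w (mem_ball_iff_abs.1 hw))
      rw [Complex.UnitDisc.coe_mk] at h6
      rw [h6]
      exact mem_ball_iff_abs.2 (Complex.UnitDisc.norm_lt_one _)
    rcases hφa with h1 | h1 <;> rcases hφb with h2 | h2
    · exact absurd (hφinj (h1.trans h2.symm)) hab
    · -- φ fixes a and b : identity
      left
      have hFa : F ↑a = ↑a := by rw [hFv a, h1]
      have hFb : F ↑b = ↑b := by rw [hFv b, h2]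
      have hfix := fix_two_id hFd hFmaps hA hB hAB hFa hFb
      intro z
      apply Complex.UnitDisc.coe_injective
      rw [← hFv z]
      exact hfix ↑z z.norm_lt_one
    · -- φ swaps a and b
      right
      have hFa : F ↑a = ↑b := by rw [hFv a, h1]
      have hFb : F ↑b = ↑a := by rw [hFv b, h2]
      have hHd : DifferentiableOn ℂ
          (fun w => mobius ↑a (mobius (mobius ↑a ↑b) (mobius ↑a (F w)))) (ball 0 1) := by
        intro w hw
        apply DifferentiableAt.differentiableWithinAt
        have hFw : ‖F w‖ < 1 := mem_ball_iff_abs.1 (hFmaps hw)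
        exact (mobius_diffAt hA (mobius_lt_one hC (mobius_lt_one hA hFw))).comp w
          ((mobius_diffAt hC (mobius_lt_one hA hFw)).comp w
            ((mobius_diffAt hA hFw).comp w (hFd.differentiableAt (isOpen_ball.mem_nhds hw))))
      have hHmaps : MapsTo (fun w => mobius ↑a (mobius (mobius ↑a ↑b) (mobius ↑a (F w))))
          (ball 0 1) (ball 0 1) := fun w hw =>
        mem_ball_iff_abs.2 (swap_maps hA hC (mem_ball_iff_abs.1 (hFmaps hw)))
      have hHa : mobius ↑a (mobius (mobius ↑a ↑b) (mobius ↑a (F ↑a))) = ↑a := by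
        rw [hFa, mobius_self, mobius_zero]
      have hHb : mobius ↑a (mobius (mobius ↑a ↑b) (mobius ↑a (F ↑b))) = ↑b := by
        rw [hFb, mobius_self, mobius_zero]
        exact mobius_invol hA hB
      have hfix := fix_two_id hHd hHmaps hA hB hAB hHa hHb
      intro z
      have hz := z.norm_lt_one
      have h3 : mobius ↑a (mobius (mobius ↑a ↑b) (mobius ↑a (F ↑z))) = ↑z := hfix ↑z hz
      have h4 : mobius ↑a (mobius (mobius ↑a ↑b) (mobius ↑a
          (mobius ↑a (mobius (mobius ↑a ↑b) (mobius ↑a (F ↑z))))))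
          = mobius ↑a (mobius (mobius ↑a ↑b) (mobius ↑a ↑z)) :=
        congrArg (fun w => mobius ↑a (mobius (mobius ↑a ↑b) (mobius ↑a w))) h3
      rw [swap_invol hA hC (mem_ball_iff_abs.1 (hFmaps (mem_ball_iff_abs.2 hz)))] at h4
      rw [← hFv z]
      exact h4
    · exact absurd (hφinj (h1.trans h2.symm)) hab
  · rintro (hid | hswap)
    · have hcomp : ∀ f : 𝔻 → ℂ, f ∘ φ = f := fun f => funext fun z => congrArg f (hid z)
      refine ⟨fun f hf => by rw [hcomp]; exact hf, ?_, fun f hf => ⟨f, hf, hcomp f⟩⟩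
      intro f hf g hg hfg
      have hfg' : f ∘ φ = g ∘ φ := hfg
      rwa [hcomp, hcomp] at hfg'
    · -- the swap map
      have hφφ : ∀ z : 𝔻, φ (φ z) = z := by
        intro z
        apply Complex.UnitDisc.coe_injective
        rw [hswap (φ z), hswap z]
        exact swap_invol hA hC z.norm_lt_one
      set lam : ℂ := ((↑a * conj' ↑b - 1) / (1 - conj' ↑a * ↑b) *
        ((↑a * conj' (mobius ↑a ↑b) - 1) / (1 - conj' ↑a * mobius ↑a ↑b))) ^ m with hlam
      have hkey : ∀ z : 𝔻, ψ (φ z) = lam * ψ z := by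
        intro z
        have hz := z.norm_lt_one
        have e1 : mobius ↑a ↑(φ z)
            = (↑a * conj' ↑b - 1) / (1 - conj' ↑a * ↑b) * mobius ↑b ↑z := by
          rw [hswap z]
          exact swap_a hA hB hz
        have e2 : mobius ↑b ↑(φ z)
            = (↑a * conj' (mobius ↑a ↑b) - 1) / (1 - conj' ↑a * mobius ↑a ↑b)
              * mobius ↑a ↑z := by
          rw [hswap z]
          exact swap_b hA hB hz
        show (mobius ↑a ↑(φ z) * mobius ↑b ↑(φ z)) ^ m
          = lam * (mobius ↑a ↑z * mobius ↑b ↑z) ^ m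
        rw [e1, e2, hlam, ← mul_pow]
        congr 1
        ring
      have hmapsin : ∀ f ∈ psiH ψ, f ∘ φ ∈ psiH ψ := by
        rintro f ⟨g, ⟨⟨G, hGd, hGv⟩, M, hM⟩, rfl⟩
        refine ⟨fun z => lam * g (φ z), ⟨⟨fun w =>
          lam * G (mobius ↑a (mobius (mobius ↑a ↑b) (mobius ↑a w))), ?_, ?_⟩,
          ‖lam‖ * M, ?_⟩, ?_⟩
        · exact (differentiableOn_const lam).mul
            (hGd.comp (swap_diff hA hC)
              (fun w hw => mem_ball_iff_abs.2 (swap_maps hA hC (mem_ball_iff_abs.1 hw))))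
        · intro z
          show lam * G (mobius ↑a (mobius (mobius ↑a ↑b) (mobius ↑a ↑z))) = lam * g (φ z)
          rw [← hswap z, hGv (φ z)]
        · intro z
          show ‖lam * g (φ z)‖ ≤ ‖lam‖ * M
          rw [norm_mul]
          exact mul_le_mul_of_nonneg_left (hM (φ z)) (norm_nonneg lam)
        · funext z
          show ψ (φ z) * g (φ z) = ψ z * (lam * g (φ z))
          rw [hkey z]; ring
      refine ⟨hmapsin, ?_, ?_⟩
      · intro f hf g hg hfg
        have hfg' : f ∘ φ = g ∘ φ := hfg
        funext z
        have h7 : f (φ (φ z)) = g (φ (φ z)) := congrFun hfg' (φ z)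
        rwa [hφφ z] at h7
      · intro f hf
        refine ⟨f ∘ φ, hmapsin f hf, ?_⟩
        show (f ∘ φ) ∘ φ = f
        funext z
        show f (φ (φ z)) = f z
        rw [hφφ z]
end
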